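/- arXiv:1703.08153 — 7 statements merged into one kernel-verified Lean document; each statement's English description precedes it below -/
import Mathlib

section
/- Let d̂ := rank(V_o), let S₂ ∈ ℝ^{d×(d−d̂)} have columns forming a basis of the null space of V_o, let S = [S₁ S₂] ∈ ℝ^{d×d} be nonsingular, and write T := S⁻¹ = col(T₁, T₂) with T₁ ∈ ℝ^{d̂×d}. Set A₁₁ := T₁AS₁ ∈ ℝ^{d̂×d̂}, B₁ := T₁B, C₁ := CS₁ (so that, as holds automatically, T₁AS₂ = 0 and CS₂ = 0). Suppose E₊^σ(x₀) is bounded above for every x₀ ∈ ℝ^d. Then, for the reduced system with matrices (A₁₁, B₁, C₁, D) and the same supply rate σ, Ê₊^σ(x̂₀) is bounded above for every x̂₀ ∈ ℝ^{d̂}, and S_a^σ(x₀) = Ŝ_a^σ(T₁x₀) for every x₀ ∈ ℝ^d; in particular, S_a^σ(z) = 0 for every z ∈ ℝ^d with V_o z = 0. -/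
open MeasureTheory Matrix Polynomial
open scoped ComplexOrder

noncomputable section

/-- real matrices of the indicated size -/
abbrev Mat (m n : ℕ) := Matrix (Fin m) (Fin n) ℝ

/-- A function `u : ℝ → ℝⁿ` is locally square-integrable if it is Lebesgue measurable and
the integral of its square over every compact set is finite. -/
def LocL2 {n : ℕ} (u : ℝ → Fin n → ℝ) : Prop :=
  Measurable u ∧ ∀ K : Set ℝ, IsCompact K → ∀ i : Fin n,
    (∫⁻ t in K, ENNReal.ofReal ((u t i) ^ 2)) < ⊤

/-- the state trajectory `x(t) = e^{A(t−t₀)}x₀ + ∫_{t₀}^{t} e^{A(t−τ)}Bu(τ)dτ` -/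
def stateSol {d n : ℕ} (A : Mat d d) (B : Mat d n) (t₀ : ℝ) (x₀ : Fin d → ℝ)
    (u : ℝ → Fin n → ℝ) (t : ℝ) : Fin d → ℝ :=
  NormedSpace.exp ((t - t₀) • A) *ᵥ x₀ +
    ∫ τ in t₀..t, NormedSpace.exp ((t - τ) • A) *ᵥ (B *ᵥ u τ)

/-- the output trajectory `y(t) = Cx(t) + Du(t)` -/
def outputSol {d n m : ℕ} (A : Mat d d) (B : Mat d n) (C : Matrix (Fin m) (Fin d) ℝ)
    (D : Matrix (Fin m) (Fin n) ℝ) (t₀ : ℝ) (x₀ : Fin d → ℝ) (u : ℝ → Fin n → ℝ)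
    (t : ℝ) : Fin m → ℝ :=
  C *ᵥ stateSol A B t₀ x₀ u t + D *ᵥ u t

/-- the observability matrix col(C, CA, …, CA^{d−1}) -/
def obsMat {d m : ℕ} (A : Mat d d) (C : Matrix (Fin m) (Fin d) ℝ) :
    Matrix (Fin d × Fin m) (Fin d) ℝ :=
  Matrix.of fun p j => (C * A ^ (p.1 : ℕ)) p.2 j

/-- the quadratic supply rate `σ(u,y) = uᵀΣ₁₁u + 2uᵀΣ₁₂y + yᵀΣ₂₂y` -/
def supplyRate {n m : ℕ} (S11 : Mat n n) (S12 : Matrix (Fin n) (Fin m) ℝ) (S22 : Mat m m)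
    (u : Fin n → ℝ) (y : Fin m → ℝ) : ℝ :=
  u ⬝ᵥ (S11 *ᵥ u) + 2 * (u ⬝ᵥ (S12 *ᵥ y)) + y ⬝ᵥ (S22 *ᵥ y)

/-- the set of extractable values of `∫ −σ(u,y)` from initial state `x₀` -/
def sigmaEnergySet {d n m : ℕ} (A : Mat d d) (B : Mat d n) (C : Matrix (Fin m) (Fin d) ℝ)
    (D : Matrix (Fin m) (Fin n) ℝ) (S11 : Mat n n) (S12 : Matrix (Fin n) (Fin m) ℝ)
    (S22 : Mat m m) (x₀ : Fin d → ℝ) : Set ℝ :=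
  { e | ∃ (t₀ t₁ : ℝ) (u : ℝ → Fin n → ℝ), t₀ ≤ t₁ ∧ LocL2 u ∧
      e = ∫ t in t₀..t₁,
        -(supplyRate S11 S12 S22 (u t) (outputSol A B C D t₀ x₀ u t)) }


lemma eq_zero_of_mulVec_eq_zero {a b : ℕ} {M : Matrix (Fin a) (Fin b) ℝ}
    (h : ∀ v, M *ᵥ v = 0) : M = 0 := by
  ext i j
  have := congrFun (h (Pi.single j 1)) i
  simpa using this

lemma pow_card_eq_neg_sum {d : ℕ} (A : Mat d d) :
    A ^ d = -∑ i ∈ Finset.range d, A.charpoly.coeff i • A ^ i := by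
  have h := Matrix.aeval_self_charpoly A
  rw [Polynomial.aeval_eq_sum_range] at h
  rw [Matrix.charpoly_natDegree_eq_dim, Fintype.card_fin] at h
  rw [Finset.sum_range_succ] at h
  have hc : A.charpoly.coeff d = 1 := by
    have := (Matrix.charpoly_monic A).coeff_natDegree
    rwa [Matrix.charpoly_natDegree_eq_dim, Fintype.card_fin] at this
  rw [hc, one_smul] at h
  linear_combination (norm := abel) h

section Alg
variable {d dh m : ℕ} {A : Mat d d} {C : Matrix (Fin m) (Fin d) ℝ}
  {S2 : Matrix (Fin d) (Fin (d - dh)) ℝ}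

lemma CAS2 (hbasis : ∀ z : Fin d → ℝ, obsMat A C *ᵥ z = 0 ↔ ∃ c : Fin (d - dh) → ℝ, z = S2 *ᵥ c) :
    ∀ k : ℕ, C * A ^ k * S2 = 0 := by
  rcases Nat.eq_zero_or_pos d with hd | hd
  · intro k
    ext i j
    subst hd
    simp [Matrix.mul_apply]
  · intro k
    induction k using Nat.strong_induction_on with
    | _ k ih =>
      rcases lt_or_ge k d with hk | hk
      · apply _root_.eq_zero_of_mulVec_eq_zero
        intro v
        have h2 : obsMat A C *ᵥ (S2 *ᵥ v) = 0 := (hbasis _).mpr ⟨v, rfl⟩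
        rw [← Matrix.mulVec_mulVec]
        funext j
        have := congrFun h2 (⟨k, hk⟩, j)
        simpa [obsMat, Matrix.mulVec, dotProduct, Matrix.mul_apply] using this
      · have hk' : A ^ k = A ^ (k - d) * A ^ d := by rw [← pow_add, Nat.sub_add_cancel hk]
        rw [hk', pow_card_eq_neg_sum A, Matrix.mul_neg, Matrix.mul_neg, Matrix.neg_mul,
          neg_eq_zero, Finset.mul_sum, Matrix.mul_sum, Matrix.sum_mul]
        apply Finset.sum_eq_zero
        intro i hi
        rw [Matrix.mul_smul, Matrix.mul_smul, Matrix.smul_mul, ← pow_add,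
          ih _ (by have := Finset.mem_range.mp hi; omega), smul_zero]
end Alg

section Alg2
variable {d dh m : ℕ} {A : Mat d d} {C : Matrix (Fin m) (Fin d) ℝ}
  {S1 : Matrix (Fin d) (Fin dh) ℝ} {S2 : Matrix (Fin d) (Fin (d - dh)) ℝ}
  {T1 : Matrix (Fin dh) (Fin d) ℝ} {T2 : Matrix (Fin (d - dh)) (Fin d) ℝ}

lemma T1AS2_zero
    (hbasis : ∀ z : Fin d → ℝ, obsMat A C *ᵥ z = 0 ↔ ∃ c : Fin (d - dh) → ℝ, z = S2 *ᵥ c)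
    (hT1S2 : T1 * S2 = 0) : T1 * A * S2 = 0 := by
  apply _root_.eq_zero_of_mulVec_eq_zero
  intro v
  have h0 : obsMat A C *ᵥ (A *ᵥ (S2 *ᵥ v)) = 0 := by
    funext p
    obtain ⟨i, j⟩ := p
    have hz : C * A ^ ((i : ℕ) + 1) * S2 = 0 := CAS2 hbasis _
    have h1 : ((C * A ^ (i : ℕ)) *ᵥ (A *ᵥ (S2 *ᵥ v))) j = 0 := by
      rw [Matrix.mulVec_mulVec, Matrix.mulVec_mulVec, Matrix.mul_assoc C, ← pow_succ, hz,
        Matrix.zero_mulVec]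
      rfl
    simpa [obsMat, Matrix.mulVec, dotProduct] using h1
  obtain ⟨c, hc⟩ := (hbasis _).mp h0
  calc (T1 * A * S2) *ᵥ v = T1 *ᵥ (A *ᵥ (S2 *ᵥ v)) := by
        rw [Matrix.mulVec_mulVec, Matrix.mulVec_mulVec]
    _ = T1 *ᵥ (S2 *ᵥ c) := by rw [hc]
    _ = 0 := by rw [Matrix.mulVec_mulVec, hT1S2, Matrix.zero_mulVec]

lemma T1A_eq
    (hbasis : ∀ z : Fin d → ℝ, obsMat A C *ᵥ z = 0 ↔ ∃ c : Fin (d - dh) → ℝ, z = S2 *ᵥ c)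
    (hT1S2 : T1 * S2 = 0) (hST : S1 * T1 + S2 * T2 = 1) :
    T1 * A = (T1 * A * S1) * T1 := by
  calc T1 * A = T1 * A * (S1 * T1 + S2 * T2) := by rw [hST, Matrix.mul_one]
    _ = (T1 * A * S1) * T1 + (T1 * A * S2) * T2 := by
        rw [Matrix.mul_add]; rw [← Matrix.mul_assoc, ← Matrix.mul_assoc]
    _ = (T1 * A * S1) * T1 := by
        rw [T1AS2_zero hbasis hT1S2, Matrix.zero_mul, add_zero]

lemma C_eq
    (hbasis : ∀ z : Fin d → ℝ, obsMat A C *ᵥ z = 0 ↔ ∃ c : Fin (d - dh) → ℝ, z = S2 *ᵥ c)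
    (hST : S1 * T1 + S2 * T2 = 1) :
    C = (C * S1) * T1 := by
  have hCS2 : C * S2 = 0 := by
    have := CAS2 hbasis (S2 := S2) 0
    rwa [pow_zero, Matrix.mul_one] at this
  calc C = C * (S1 * T1 + S2 * T2) := by rw [hST, Matrix.mul_one]
    _ = (C * S1) * T1 + (C * S2) * T2 := by rw [Matrix.mul_add]; rw [← Matrix.mul_assoc, ← Matrix.mul_assoc]
    _ = (C * S1) * T1 := by rw [hCS2, Matrix.zero_mul, add_zero]

end Alg2

open NormedSpace in
lemma exp_intertwine {a b : ℕ} (T : Matrix (Fin a) (Fin b) ℝ) (X : Mat b b) (Y : Mat a a)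
    (h : T * X = Y * T) : T * exp X = exp Y * T := by
  letI : SeminormedRing (Mat b b) := Matrix.linftyOpSemiNormedRing
  letI : NormedRing (Mat b b) := Matrix.linftyOpNormedRing
  letI : NormedAlgebra ℝ (Mat b b) := Matrix.linftyOpNormedAlgebra
  letI : SeminormedRing (Mat a a) := Matrix.linftyOpNormedRing.toSeminormedRing
  letI : NormedRing (Mat a a) := Matrix.linftyOpNormedRing
  letI : NormedAlgebra ℝ (Mat a a) := Matrix.linftyOpNormedAlgebra
  have hpow : ∀ k : ℕ, T * X ^ k = Y ^ k * T := by
    intro k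
    induction k with
    | zero => rw [pow_zero, pow_zero, Matrix.mul_one, Matrix.one_mul]
    | succ k ih =>
        rw [pow_succ, pow_succ, ← Matrix.mul_assoc, ih, Matrix.mul_assoc, h, ← Matrix.mul_assoc]
  let L : Mat b b →L[ℝ] Matrix (Fin a) (Fin b) ℝ :=
    { toFun := fun M => T * M
      map_add' := fun M N => Matrix.mul_add _ _ _
      map_smul' := fun c M => Matrix.mul_smul _ _ _
      cont := continuous_const.matrix_mul continuous_id }
  let R : Mat a a →L[ℝ] Matrix (Fin a) (Fin b) ℝ :=
    { toFun := fun M => M * T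
      map_add' := fun M N => Matrix.add_mul _ _ _
      map_smul' := fun c M => Matrix.smul_mul _ _ _
      cont := Continuous.matrix_mul continuous_id continuous_const }
  calc T * exp X = L (∑' n : ℕ, ((n.factorial : ℝ)⁻¹) • X ^ n) := by
        rw [exp_eq_tsum ℝ]; rfl
    _ = ∑' n : ℕ, L (((n.factorial : ℝ)⁻¹) • X ^ n) := L.map_tsum (expSeries_summable' X)
    _ = ∑' n : ℕ, R (((n.factorial : ℝ)⁻¹) • Y ^ n) := by
        refine tsum_congr fun n => ?_
        simp only [L, R, ContinuousLinearMap.coe_mk', LinearMap.coe_mk, AddHom.coe_mk,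
          Matrix.mul_smul, Matrix.smul_mul, hpow]
    _ = R (∑' n : ℕ, ((n.factorial : ℝ)⁻¹) • Y ^ n) := (R.map_tsum (expSeries_summable' Y)).symm
    _ = exp Y * T := by rw [exp_eq_tsum ℝ]; rfl

lemma locL2_component_integrable {n : ℕ} {u : ℝ → Fin n → ℝ} (hu : LocL2 u) (a b : ℝ)
    (i : Fin n) : IntegrableOn (fun τ => u τ i) (Set.uIoc a b) := by
  refine ⟨((measurable_pi_apply i).comp hu.1).aestronglyMeasurable, ?_⟩
  rw [hasFiniteIntegral_iff_norm]
  have hb : ∀ τ : ℝ, ENNReal.ofReal ‖u τ i‖ ≤ 1 + ENNReal.ofReal ((u τ i) ^ 2) := by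
    intro τ
    rw [← ENNReal.ofReal_one, ← ENNReal.ofReal_add zero_le_one (sq_nonneg _)]
    refine ENNReal.ofReal_le_ofReal ?_
    rw [Real.norm_eq_abs]
    nlinarith [sq_abs (u τ i), sq_nonneg (|u τ i| - 1), abs_nonneg (u τ i)]
  calc (∫⁻ τ in Set.uIoc a b, ENNReal.ofReal ‖u τ i‖)
      ≤ ∫⁻ τ in Set.uIoc a b, (1 + ENNReal.ofReal ((u τ i) ^ 2)) := lintegral_mono hb
    _ = volume (Set.uIoc a b) + ∫⁻ τ in Set.uIoc a b, ENNReal.ofReal ((u τ i) ^ 2) := by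
        rw [lintegral_add_left measurable_const, lintegral_const, one_mul,
          Measure.restrict_apply_univ]
    _ ≤ volume (Set.uIoc a b) + ∫⁻ τ in Set.uIcc a b, ENNReal.ofReal ((u τ i) ^ 2) := by
        gcongr
        exact Set.uIoc_subset_uIcc
    _ < ⊤ := by
        refine ENNReal.add_lt_top.mpr ⟨?_, hu.2 _ isCompact_uIcc i⟩
        rw [Set.uIoc]
        exact (Real.volume_Ioc ▸ ENNReal.ofReal_lt_top)

lemma locL2_comp_integrable {k n : ℕ} (E : Mat k k) (G : Matrix (Fin k) (Fin n) ℝ)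
    {u : ℝ → Fin n → ℝ} (hu : LocL2 u) (t a b : ℝ) :
    IntervalIntegrable (fun τ => NormedSpace.exp ((t - τ) • E) *ᵥ (G *ᵥ u τ)) volume a b := by
  rw [intervalIntegrable_iff]
  set W : ℝ → Matrix (Fin k) (Fin n) ℝ := fun τ => NormedSpace.exp ((t - τ) • E) * G with hWdef
  have heq : (fun τ => NormedSpace.exp ((t - τ) • E) *ᵥ (G *ᵥ u τ)) =
      fun τ => W τ *ᵥ u τ := funext fun τ => Matrix.mulVec_mulVec _ _ _
  rw [heq]
  have hWc : Continuous W := by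
    letI : SeminormedRing (Mat k k) := Matrix.linftyOpSemiNormedRing
    letI : NormedRing (Mat k k) := Matrix.linftyOpNormedRing
    letI : NormedAlgebra ℝ (Mat k k) := Matrix.linftyOpNormedAlgebra
    letI : NormedAlgebra ℚ (Mat k k) := .restrictScalars ℚ ℝ (Mat k k)
    exact ((NormedSpace.exp_continuous).comp
      ((continuous_const.sub continuous_id).smul continuous_const)).matrix_mul continuous_const
  have hWnn : Continuous fun τ => ∑ i : Fin k, ∑ j : Fin n, |W τ i j| :=
    continuous_finset_sum _ fun i _ => continuous_finset_sum _ fun j _ => (hWc.matrix_elem i j).abs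
  obtain ⟨K0, hK0⟩ := (isCompact_uIcc (a := a) (b := b)).exists_bound_of_continuousOn
    hWnn.continuousOn
  have hK0' : ∀ τ ∈ Set.uIcc a b, ∀ i j, |W τ i j| ≤ K0 := by
    intro τ hτ i j
    have h1 : |W τ i j| ≤ ∑ j' : Fin n, |W τ i j'| :=
      Finset.single_le_sum (f := fun j' => |W τ i j'|) (fun _ _ => abs_nonneg _)
        (Finset.mem_univ j)
    have h2 : (∑ j' : Fin n, |W τ i j'|) ≤ ∑ i' : Fin k, ∑ j' : Fin n, |W τ i' j'| :=
      Finset.single_le_sum (f := fun i' => ∑ j' : Fin n, |W τ i' j'|)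
        (fun _ _ => Finset.sum_nonneg fun _ _ => abs_nonneg _) (Finset.mem_univ i)
    have h3 := hK0 τ hτ
    rw [Real.norm_eq_abs] at h3
    linarith [le_abs_self (∑ i' : Fin k, ∑ j' : Fin n, |W τ i' j'|)]
  have hK0nn : 0 ≤ K0 :=
    le_trans (norm_nonneg _) (hK0 a Set.left_mem_uIcc)
  have hmeas : Measurable fun τ => W τ *ᵥ u τ := by
    rw [measurable_pi_iff]
    intro i
    simp only [Matrix.mulVec, dotProduct]
    exact Finset.measurable_sum _ fun j _ =>
      ((hWc.matrix_elem i j).measurable).mul ((measurable_pi_apply j).comp hu.1)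
  have hmaj : IntegrableOn (fun τ => K0 * ∑ j : Fin n, |u τ j|) (Set.uIoc a b) :=
    (integrable_finset_sum _ fun j _ => (locL2_component_integrable hu a b j).abs).const_mul K0
  refine Integrable.mono' hmaj hmeas.aestronglyMeasurable ?_
  filter_upwards [ae_restrict_mem measurableSet_uIoc] with τ hτ
  have hτ' : τ ∈ Set.uIcc a b := Set.uIoc_subset_uIcc hτ
  rw [pi_norm_le_iff_of_nonneg (by positivity)]
  intro i
  rw [Real.norm_eq_abs]
  calc |(W τ *ᵥ u τ) i| = |∑ j : Fin n, W τ i j * u τ j| := by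
        simp [Matrix.mulVec, dotProduct]
    _ ≤ ∑ j : Fin n, |W τ i j * u τ j| := Finset.abs_sum_le_sum_abs _ _
    _ ≤ ∑ j : Fin n, K0 * |u τ j| := Finset.sum_le_sum fun j _ => by
        rw [abs_mul]
        exact mul_le_mul_of_nonneg_right (hK0' τ hτ' i j) (abs_nonneg _)
    _ = K0 * ∑ j : Fin n, |u τ j| := (Finset.mul_sum _ _ _).symm

lemma output_reduce {d dh n m : ℕ} (A : Mat d d) (B : Mat d n) (C : Matrix (Fin m) (Fin d) ℝ)
    (D : Matrix (Fin m) (Fin n) ℝ) (T1 : Matrix (Fin dh) (Fin d) ℝ)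
    (A' : Mat dh dh) (C' : Matrix (Fin m) (Fin dh) ℝ)
    (hTA : T1 * A = A' * T1) (hC : C = C' * T1)
    {u : ℝ → Fin n → ℝ} (hu : LocL2 u) (t₀ : ℝ) (x₀ : Fin d → ℝ) (t : ℝ) :
    outputSol A B C D t₀ x₀ u t = outputSol A' (T1 * B) C' D t₀ (T1 *ᵥ x₀) u t := by
  have hexp : ∀ s : ℝ, T1 * NormedSpace.exp (s • A) = NormedSpace.exp (s • A') * T1 :=
    fun s => exp_intertwine _ _ _ (by rw [Matrix.mul_smul, hTA, Matrix.smul_mul])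
  have hCexp : ∀ s : ℝ, C * NormedSpace.exp (s • A) =
      (C' * NormedSpace.exp (s • A')) * T1 :=
    fun s => by rw [hC, Matrix.mul_assoc, hexp s, ← Matrix.mul_assoc]
  have hfint := locL2_comp_integrable A B hu t t₀ t
  have hgint := locL2_comp_integrable A' (T1 * B) hu t t₀ t
  let Lc : (Fin d → ℝ) →L[ℝ] (Fin m → ℝ) := LinearMap.toContinuousLinearMap C.mulVecLin
  let Lc' : (Fin dh → ℝ) →L[ℝ] (Fin m → ℝ) := LinearMap.toContinuousLinearMap C'.mulVecLin
  have h1 : C *ᵥ (∫ τ in t₀..t, NormedSpace.exp ((t - τ) • A) *ᵥ (B *ᵥ u τ)) =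
      ∫ τ in t₀..t, C *ᵥ (NormedSpace.exp ((t - τ) • A) *ᵥ (B *ᵥ u τ)) := by
    have := Lc.intervalIntegral_comp_comm hfint
    simpa [Lc] using this.symm
  have h2 : C' *ᵥ (∫ τ in t₀..t, NormedSpace.exp ((t - τ) • A') *ᵥ ((T1 * B) *ᵥ u τ)) =
      ∫ τ in t₀..t, C' *ᵥ (NormedSpace.exp ((t - τ) • A') *ᵥ ((T1 * B) *ᵥ u τ)) := by
    have := Lc'.intervalIntegral_comp_comm hgint
    simpa [Lc'] using this.symm
  unfold outputSol stateSol
  rw [Matrix.mulVec_add, Matrix.mulVec_add]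
  congr 1
  congr 1
  · simp only [Matrix.mulVec_mulVec]
    rw [hCexp, Matrix.mul_assoc]
  · rw [h1, h2]
    refine intervalIntegral.integral_congr fun τ _ => ?_
    simp only [Matrix.mulVec_mulVec]
    rw [← Matrix.mul_assoc, hCexp, Matrix.mul_assoc, Matrix.mul_assoc]

lemma locL2_smul {n : ℕ} {u : ℝ → Fin n → ℝ} (hu : LocL2 u) (c : ℝ) :
    LocL2 (fun s => c • u s) := by
  refine ⟨hu.1.const_smul c, fun K hK i => ?_⟩
  have heq : ∀ t : ℝ, ENNReal.ofReal (((c • u t) i) ^ 2) =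
      ENNReal.ofReal (c ^ 2) * ENNReal.ofReal ((u t i) ^ 2) := by
    intro t
    rw [← ENNReal.ofReal_mul (sq_nonneg c)]
    congr 1
    simp [mul_pow]
  simp only [heq]
  rw [lintegral_const_mul' _ _ ENNReal.ofReal_ne_top]
  exact ENNReal.mul_lt_top ENNReal.ofReal_lt_top (hu.2 K hK i)

lemma supply_scale {n m : ℕ} (S11 : Mat n n) (S12 : Matrix (Fin n) (Fin m) ℝ) (S22 : Mat m m)
    (c : ℝ) (u : Fin n → ℝ) (y : Fin m → ℝ) :
    supplyRate S11 S12 S22 (c • u) (c • y) = c ^ 2 * supplyRate S11 S12 S22 u y := by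
  simp only [supplyRate, Matrix.mulVec_smul, smul_dotProduct, dotProduct_smul,
    smul_eq_mul]
  ring

lemma output_scale {k n m : ℕ} (E : Mat k k) (G : Matrix (Fin k) (Fin n) ℝ)
    (C' : Matrix (Fin m) (Fin k) ℝ) (D : Matrix (Fin m) (Fin n) ℝ)
    (c : ℝ) (u : ℝ → Fin n → ℝ) (t₀ t : ℝ) :
    outputSol E G C' D t₀ 0 (fun s => c • u s) t = c • outputSol E G C' D t₀ 0 u t := by
  have hstate : stateSol E G t₀ 0 (fun s => c • u s) t = c • stateSol E G t₀ 0 u t := by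
    unfold stateSol
    simp [Matrix.mulVec_zero, Matrix.mulVec_smul, intervalIntegral.integral_smul, smul_add]
  unfold outputSol
  rw [hstate]
  simp [Matrix.mulVec_smul, smul_add]

/-- reduction to the observable part of the state space. -/
theorem statement9 {d n m dh : ℕ} (A : Mat d d) (B : Mat d n) (C : Matrix (Fin m) (Fin d) ℝ)
    (D : Matrix (Fin m) (Fin n) ℝ)
    (S11 : Mat n n) (S12 : Matrix (Fin n) (Fin m) ℝ) (S22 : Mat m m)
    (hS11 : S11.IsSymm) (hS22 : S22.IsSymm)
    (hrank : (obsMat A C).rank = dh)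
    (S1 : Matrix (Fin d) (Fin dh) ℝ) (S2 : Matrix (Fin d) (Fin (d - dh)) ℝ)
    (T1 : Matrix (Fin dh) (Fin d) ℝ) (T2 : Matrix (Fin (d - dh)) (Fin d) ℝ)
    (hbasis : ∀ z : Fin d → ℝ, obsMat A C *ᵥ z = 0 ↔ ∃ c : Fin (d - dh) → ℝ, z = S2 *ᵥ c)
    (hT1S1 : T1 * S1 = 1) (hT1S2 : T1 * S2 = 0) (hT2S1 : T2 * S1 = 0) (hT2S2 : T2 * S2 = 1)
    (hST : S1 * T1 + S2 * T2 = 1)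
    (H2 : ∀ x₀ : Fin d → ℝ, BddAbove (sigmaEnergySet A B C D S11 S12 S22 x₀)) :
    (∀ xh₀ : Fin dh → ℝ,
      BddAbove (sigmaEnergySet (T1 * A * S1) (T1 * B) (C * S1) D S11 S12 S22 xh₀)) ∧
    (∀ x₀ : Fin d → ℝ,
      sSup (sigmaEnergySet A B C D S11 S12 S22 x₀) =
        sSup (sigmaEnergySet (T1 * A * S1) (T1 * B) (C * S1) D S11 S12 S22 (T1 *ᵥ x₀))) ∧
    (∀ z : Fin d → ℝ, obsMat A C *ᵥ z = 0 →
      sSup (sigmaEnergySet A B C D S11 S12 S22 z) = 0) := by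

  have hTA : T1 * A = (T1 * A * S1) * T1 := T1A_eq hbasis hT1S2 hST
  have hCeq : C = (C * S1) * T1 := C_eq hbasis hST
  have hout : ∀ (x₀ : Fin d → ℝ) (u : ℝ → Fin n → ℝ), LocL2 u → ∀ t₀ t : ℝ,
      outputSol A B C D t₀ x₀ u t =
        outputSol (T1 * A * S1) (T1 * B) (C * S1) D t₀ (T1 *ᵥ x₀) u t :=
    fun x₀ u hu t₀ t => output_reduce A B C D T1 _ _ hTA hCeq hu t₀ x₀ t
  have hset : ∀ x₀ : Fin d → ℝ, sigmaEnergySet A B C D S11 S12 S22 x₀ =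
      sigmaEnergySet (T1 * A * S1) (T1 * B) (C * S1) D S11 S12 S22 (T1 *ᵥ x₀) := by
    intro x₀
    ext e
    simp only [sigmaEnergySet, Set.mem_setOf_eq]
    constructor
    · rintro ⟨t₀, t₁, u, h1, hu, rfl⟩
      exact ⟨t₀, t₁, u, h1, hu,
        intervalIntegral.integral_congr fun t _ => by rw [hout x₀ u hu t₀ t]⟩
    · rintro ⟨t₀, t₁, u, h1, hu, rfl⟩
      exact ⟨t₀, t₁, u, h1, hu,
        (intervalIntegral.integral_congr fun t _ => by rw [hout x₀ u hu t₀ t]).symm⟩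
  have hbdd : ∀ xh₀ : Fin dh → ℝ,
      BddAbove (sigmaEnergySet (T1 * A * S1) (T1 * B) (C * S1) D S11 S12 S22 xh₀) := by
    intro xh₀
    have h := H2 (S1 *ᵥ xh₀)
    rw [hset (S1 *ᵥ xh₀), Matrix.mulVec_mulVec, hT1S1, Matrix.one_mulVec] at h
    exact h
  have hmem0 : (0 : ℝ) ∈ sigmaEnergySet (T1 * A * S1) (T1 * B) (C * S1) D S11 S12 S22 0 := by
    refine ⟨0, 0, fun _ => 0, le_refl 0, ⟨measurable_const, fun K hK i => by simp⟩, ?_⟩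
    rw [intervalIntegral.integral_same]
  refine ⟨hbdd, fun x₀ => by rw [hset x₀], fun z hz => ?_⟩
  have hT1z : T1 *ᵥ z = 0 := by
    obtain ⟨c, rfl⟩ := (hbasis z).mp hz
    rw [Matrix.mulVec_mulVec, hT1S2, Matrix.zero_mulVec]
  rw [hset z, hT1z]
  have hub : ∀ e ∈ sigmaEnergySet (T1 * A * S1) (T1 * B) (C * S1) D S11 S12 S22 0, e ≤ 0 := by
    rintro e ⟨t₀, t₁, u, h1, hu, rfl⟩
    set I := ∫ t in t₀..t₁, -(supplyRate S11 S12 S22 (u t)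
      (outputSol (T1 * A * S1) (T1 * B) (C * S1) D t₀ 0 u t)) with hI
    by_contra hpos
    push_neg at hpos
    obtain ⟨M, hM⟩ := hbdd 0
    have hM0 : (0 : ℝ) ≤ M := hM hmem0
    set c := Real.sqrt ((M + 1) / I) with hc
    have hc2 : c ^ 2 = (M + 1) / I :=
      Real.sq_sqrt (div_nonneg (by linarith) (le_of_lt hpos))
    have hmemc : c ^ 2 * I ∈
        sigmaEnergySet (T1 * A * S1) (T1 * B) (C * S1) D S11 S12 S22 0 := by
      refine ⟨t₀, t₁, fun s => c • u s, h1, locL2_smul hu c, ?_⟩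
      rw [hI, ← intervalIntegral.integral_const_mul]
      refine (intervalIntegral.integral_congr fun t _ => ?_).symm
      rw [output_scale, supply_scale]
      ring
    have hle := hM hmemc
    rw [hc2, div_mul_cancel₀ _ (ne_of_gt hpos)] at hle
    linarith
  exact le_antisymm (csSup_le ⟨0, hmem0⟩ hub) (le_csSup (hbdd 0) hmem0)

end
end

section
/- Let P, Q ∈ ℝ^{n×n}[ξ] be such that (P,Q) is a positive-real pair, Q is nonsingular (det Q ≠ 0) and Q⁻¹P is proper, and let D₀ := lim_{ξ→∞}(Q⁻¹P)(ξ). Define P' := P − ½·Q(D₀ − D₀ᵀ) and Q' := Q. Then (P',Q') is a positive-real pair, Q'⁻¹P' is proper, and lim_{ξ→∞}(Q'⁻¹P')(ξ) = ½(D₀ + D₀ᵀ), which is a symmetric matrix. -/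
open MeasureTheory Matrix Polynomial
open scoped ComplexOrder

noncomputable section

/-- evaluation of a real polynomial matrix at a complex point -/
def evalC {m n : Type*} (P : Matrix m n (Polynomial ℝ)) (z : ℂ) : Matrix m n ℂ :=
  Matrix.of fun i j => Polynomial.aeval z (P i j)

/-- the polynomial matrix `P(−ξ)ᵀ` -/
def starT {m n : Type*} (P : Matrix m n (Polynomial ℝ)) : Matrix n m (Polynomial ℝ) :=
  Matrix.of fun i j => (P j i).comp (-Polynomial.X)

/-- positive-real pair of polynomial matrices -/
def PosRealPair {k : Type*} [Fintype k] [DecidableEq k]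
    (P Q : Matrix k k (Polynomial ℝ)) : Prop :=
  (∀ z : ℂ, 0 < z.re →
      (evalC P z * (evalC Q ((starRingEnd ℂ) z))ᵀ +
        evalC Q z * (evalC P ((starRingEnd ℂ) z))ᵀ).PosSemidef) ∧
  (∀ z : ℂ, 0 ≤ z.re →
      (Matrix.fromCols (evalC P z) (-(evalC Q z))).rank = Fintype.card k) ∧
  (∀ (p : k → Polynomial ℝ) (z : ℂ),
      Matrix.vecMul p (P * starT Q + Q * starT P) = 0 →
      Matrix.vecMul (fun i => Polynomial.aeval z (p i))
        (Matrix.fromCols (evalC P z) (-(evalC Q z))) = 0 →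
      (fun i => Polynomial.aeval z (p i)) = (0 : k → ℂ))

/-- the substitution ξ ↦ −ξ on real polynomials, as a ring isomorphism -/
def negX : Polynomial ℝ ≃+* Polynomial ℝ where
  toFun p := p.comp (-Polynomial.X)
  invFun p := p.comp (-Polynomial.X)
  left_inv p := by
    show (p.comp (-Polynomial.X)).comp (-Polynomial.X) = p
    rw [Polynomial.comp_assoc]
    simp
  right_inv p := by
    show (p.comp (-Polynomial.X)).comp (-Polynomial.X) = p
    rw [Polynomial.comp_assoc]
    simp
  map_add' p q := Polynomial.add_comp
  map_mul' p q := Polynomial.mul_comp p q (-Polynomial.X)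

/-- the substitution ξ ↦ −ξ on real rational functions -/
def ratNeg : RatFunc ℝ →+* RatFunc ℝ :=
  RatFunc.mapRingHom (negX : Polynomial ℝ →+* Polynomial ℝ)
    (by
      intro p hp
      have hp0 : p ≠ 0 := nonZeroDivisors.ne_zero hp
      refine Submonoid.mem_comap.mpr (mem_nonZeroDivisors_of_ne_zero ?_)
      intro h
      exact hp0 (negX.injective (by simpa using h)))

/-- embed real matrices into matrices of rational functions -/
def ratOf {m n : Type*} (M : Matrix m n ℝ) : Matrix m n (RatFunc ℝ) :=
  M.map (algebraMap ℝ (RatFunc ℝ))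

/-- embed polynomial matrices into matrices of rational functions -/
def ratM {m n : Type*} (M : Matrix m n (Polynomial ℝ)) : Matrix m n (RatFunc ℝ) :=
  M.map (algebraMap (Polynomial ℝ) (RatFunc ℝ))

/-- the rational matrix `M(−ξ)ᵀ` -/
def paraT {m n : Type*} (M : Matrix m n (RatFunc ℝ)) : Matrix n m (RatFunc ℝ) :=
  (M.map ratNeg)ᵀ

/-- the transfer function `H = D + C (ξI − A)⁻¹ B` -/
def transferFn {d n m : ℕ} (A : Matrix (Fin d) (Fin d) ℝ) (B : Matrix (Fin d) (Fin n) ℝ)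
    (C : Matrix (Fin m) (Fin d) ℝ) (D : Matrix (Fin m) (Fin n) ℝ) :
    Matrix (Fin m) (Fin n) (RatFunc ℝ) :=
  ratOf D + ratOf C *
    (Matrix.diagonal (fun _ => (RatFunc.X : RatFunc ℝ)) - ratOf A)⁻¹ * ratOf B

/-- evaluation of a real rational function at a complex point (junk value at poles) -/
def evalRat (f : RatFunc ℝ) (z : ℂ) : ℂ := RatFunc.eval (algebraMap ℝ ℂ) z f

/-- `Z` is a spectral factor of `Φ`: `Z(−ξ)ᵀZ(ξ) = Φ(ξ)`, no entry of `Z` has a pole in the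
open right half-plane, and `Z(λ)` has full row rank for every `λ` there -/
def IsSpectralFactor {q k : ℕ} (Z : Matrix (Fin q) (Fin k) (RatFunc ℝ))
    (Φ : Matrix (Fin k) (Fin k) (RatFunc ℝ)) : Prop :=
  paraT Z * Z = Φ ∧
  (∀ (i : Fin q) (j : Fin k) (z : ℂ), 0 < z.re → Polynomial.aeval z ((Z i j).denom) ≠ 0) ∧
  (∀ z : ℂ, 0 < z.re → (Matrix.of fun i j => evalRat (Z i j) z).rank = q)

/-- the rational matrix `W + L(ξI − A)⁻¹B` -/
def Zfac {d n q : ℕ} (A : Matrix (Fin d) (Fin d) ℝ) (B : Matrix (Fin d) (Fin n) ℝ)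
    (L : Matrix (Fin q) (Fin d) ℝ) (W : Matrix (Fin q) (Fin n) ℝ) :
    Matrix (Fin q) (Fin n) (RatFunc ℝ) :=
  ratOf W + ratOf L *
    (Matrix.diagonal (fun _ => (RatFunc.X : RatFunc ℝ)) - ratOf A)⁻¹ * ratOf B

/-- a real rational function is proper if its numerator degree is at most its
denominator degree -/
def ratProper (f : RatFunc ℝ) : Prop := f.num.degree ≤ f.denom.degree

/-- the limit of a rational function at infinity: the ratio of the leading coefficients when
the degrees agree, and `0` otherwise (in particular when the numerator degree is smaller) -/
def ratLimInf (f : RatFunc ℝ) : ℝ :=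
  if f.num.degree = f.denom.degree then f.num.leadingCoeff / f.denom.leadingCoeff else 0

/-- a rational matrix is proper if every entry is proper -/
def ProperM {m n : Type*} (M : Matrix m n (RatFunc ℝ)) : Prop := ∀ i j, ratProper (M i j)

/-- the entrywise limit at infinity of a rational matrix -/
def limM {m n : Type*} (M : Matrix m n (RatFunc ℝ)) : Matrix m n ℝ :=
  Matrix.of fun i j => ratLimInf (M i j)


section Aux

open Polynomial Matrix

/-! ### auxiliary lemmas on rational functions -/

lemma aux_gcd_eq_one_of_isCoprime {p q : Polynomial ℝ} (h : IsCoprime p q) :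
    gcd p q = 1 := by
  have h1 : IsUnit (gcd p q) := gcd_isUnit_iff p q |>.mpr h
  rw [← normalize_gcd]; exact normalize_eq_one.mpr h1

lemma aux_num_denom_of_coprime {p q : Polynomial ℝ} (hq : q.Monic) (h : IsCoprime p q) :
    (algebraMap _ (RatFunc ℝ) p / algebraMap _ _ q).num = p ∧
    (algebraMap _ (RatFunc ℝ) p / algebraMap _ _ q).denom = q := by
  rw [RatFunc.num_div, RatFunc.denom_div _ hq.ne_zero, aux_gcd_eq_one_of_isCoprime h]
  simp [hq.leadingCoeff]

lemma aux_sub_const_eq (f : RatFunc ℝ) (c : ℝ) :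
    f - algebraMap ℝ (RatFunc ℝ) c =
      algebraMap _ (RatFunc ℝ) (f.num - Polynomial.C c * f.denom) /
        algebraMap _ _ f.denom := by
  have hd : (algebraMap (Polynomial ℝ) (RatFunc ℝ)) f.denom ≠ 0 :=
    RatFunc.algebraMap_ne_zero f.denom_ne_zero
  have hmul := div_mul_cancel₀ (algebraMap (Polynomial ℝ) (RatFunc ℝ) f.num) hd
  rw [RatFunc.num_div_denom] at hmul
  have hc : algebraMap ℝ (RatFunc ℝ) c
      = algebraMap (Polynomial ℝ) (RatFunc ℝ) (Polynomial.C c) := by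
    rw [IsScalarTower.algebraMap_apply ℝ (Polynomial ℝ) (RatFunc ℝ)]
    rfl
  rw [hc, eq_div_iff hd, sub_mul, hmul, map_sub, _root_.map_mul]

lemma aux_sub_const_num_denom (f : RatFunc ℝ) (c : ℝ)
    (h0 : f.num - Polynomial.C c * f.denom ≠ 0) :
    (f - algebraMap ℝ (RatFunc ℝ) c).num = f.num - Polynomial.C c * f.denom ∧
    (f - algebraMap ℝ (RatFunc ℝ) c).denom = f.denom := by
  rw [aux_sub_const_eq]
  refine aux_num_denom_of_coprime f.monic_denom ?_
  have h2 := f.isCoprime_num_denom.add_mul_right_left (-Polynomial.C c)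
  have : f.num - Polynomial.C c * f.denom = f.num + -Polynomial.C c * f.denom := by ring
  rw [this]; exact h2

lemma aux_ratProper_sub_const {f : RatFunc ℝ} (c : ℝ) (hf : ratProper f) :
    ratProper (f - algebraMap ℝ (RatFunc ℝ) c) := by
  by_cases h0 : f.num - Polynomial.C c * f.denom = 0
  · rw [aux_sub_const_eq, h0]
    simp [ratProper]
  · obtain ⟨hn, hd⟩ := aux_sub_const_num_denom f c h0
    rw [ratProper, hn, hd]
    refine le_trans (Polynomial.degree_sub_le _ _) (max_le hf ?_)
    calc (Polynomial.C c * f.denom).degree ≤ (Polynomial.C c).degree + f.denom.degree :=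
          Polynomial.degree_mul_le _ _
      _ ≤ 0 + f.denom.degree := by
          gcongr; exact Polynomial.degree_C_le
      _ = f.denom.degree := by rw [zero_add]

lemma aux_ratLimInf_sub_const {f : RatFunc ℝ} (c : ℝ) (hf : ratProper f) :
    ratLimInf (f - algebraMap ℝ (RatFunc ℝ) c) = ratLimInf f - c := by
  by_cases hc : c = 0
  · simp [hc]
  by_cases h0 : f.num - Polynomial.C c * f.denom = 0
  · have hf_eq : f = algebraMap ℝ (RatFunc ℝ) c := by
      have h1 := aux_sub_const_eq f c
      rw [h0] at h1
      simpa [sub_eq_zero] using h1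
    rw [hf_eq, sub_self]
    have hnum : (algebraMap ℝ (RatFunc ℝ) c).num = Polynomial.C c := by
      rw [IsScalarTower.algebraMap_apply ℝ (Polynomial ℝ) (RatFunc ℝ)]
      exact RatFunc.num_algebraMap _
    have hden : (algebraMap ℝ (RatFunc ℝ) c).denom = 1 := by
      rw [IsScalarTower.algebraMap_apply ℝ (Polynomial ℝ) (RatFunc ℝ)]
      exact RatFunc.denom_algebraMap _
    simp [ratLimInf, hnum, hden, Polynomial.degree_C hc, Polynomial.leadingCoeff_C]
  · obtain ⟨hn, hd⟩ := aux_sub_const_num_denom f c h0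
    set a := f.num with ha
    set b := f.denom with hb
    have hbm : b.Monic := f.monic_denom
    have hb0 : b ≠ 0 := f.denom_ne_zero
    have hbd : b.degree = (b.natDegree : WithBot ℕ) := Polynomial.degree_eq_natDegree hb0
    have hcoeff : (a - Polynomial.C c * b).coeff b.natDegree = a.coeff b.natDegree - c := by
      rw [Polynomial.coeff_sub, Polynomial.coeff_C_mul]
      have : b.coeff b.natDegree = 1 := hbm.coeff_natDegree
      rw [this, mul_one]
    have hdegle : (a - Polynomial.C c * b).degree ≤ b.degree := by
      refine le_trans (Polynomial.degree_sub_le _ _) (max_le hf ?_)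
      calc (Polynomial.C c * b).degree ≤ (Polynomial.C c).degree + b.degree :=
            Polynomial.degree_mul_le _ _
        _ ≤ 0 + b.degree := by gcongr; exact Polynomial.degree_C_le
        _ = b.degree := by rw [zero_add]
    rw [ratLimInf, ratLimInf, hn, hd, hbm.leadingCoeff, div_one, div_one]
    by_cases hab : a.degree = b.degree
    · have hand : a.natDegree = b.natDegree := by
        rw [hbd] at hab
        exact Polynomial.natDegree_eq_of_degree_eq_some hab
      have hlead : a.coeff b.natDegree = a.leadingCoeff := by
        rw [Polynomial.leadingCoeff, hand]
      rw [if_pos hab]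
      by_cases hz : a.leadingCoeff - c = 0
      · have hcz : (a - Polynomial.C c * b).coeff b.natDegree = 0 := by
          rw [hcoeff, hlead, hz]
        have hne : (a - Polynomial.C c * b).degree ≠ b.degree := by
          intro hcon
          have hnd : (a - Polynomial.C c * b).natDegree = b.natDegree := by
            rw [hbd] at hcon
            exact Polynomial.natDegree_eq_of_degree_eq_some hcon
          have := Polynomial.leadingCoeff_ne_zero.mpr h0
          rw [Polynomial.leadingCoeff, hnd, hcz] at this
          exact this rfl
        rw [if_neg hne]
        linarith [hz]
      · have hcz : (a - Polynomial.C c * b).coeff b.natDegree ≠ 0 := by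
          rw [hcoeff, hlead]; exact hz
        have hdeg : (a - Polynomial.C c * b).degree = b.degree := by
          refine le_antisymm hdegle ?_
          rw [hbd]
          exact Polynomial.le_degree_of_ne_zero hcz
        have hnd : (a - Polynomial.C c * b).natDegree = b.natDegree := by
          rw [hbd] at hdeg
          exact Polynomial.natDegree_eq_of_degree_eq_some hdeg
        rw [if_pos hdeg, Polynomial.leadingCoeff, hnd, hcoeff, hlead]
    · have hlt : a.degree < b.degree := lt_of_le_of_ne hf hab
      have hcz : a.coeff b.natDegree = 0 := by
        apply Polynomial.coeff_eq_zero_of_degree_lt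
        rwa [← hbd]
      have hcoeff' : (a - Polynomial.C c * b).coeff b.natDegree = -c := by
        rw [hcoeff, hcz, zero_sub]
      have hdeg : (a - Polynomial.C c * b).degree = b.degree := by
        refine le_antisymm hdegle ?_
        rw [hbd]
        exact Polynomial.le_degree_of_ne_zero (by rw [hcoeff']; simpa using hc)
      have hnd : (a - Polynomial.C c * b).natDegree = b.natDegree := by
        rw [hbd] at hdeg
        exact Polynomial.natDegree_eq_of_degree_eq_some hdeg
      rw [if_pos hdeg, if_neg hab, Polynomial.leadingCoeff, hnd, hcoeff', zero_sub]

/-! ### auxiliary lemmas on `evalC` and `starT` -/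

lemma aux_evalC_sub {m n : Type*} (A B : Matrix m n (Polynomial ℝ)) (z : ℂ) :
    evalC (A - B) z = evalC A z - evalC B z := by
  ext i j; simp [evalC]

lemma aux_evalC_smul {m n : Type*} (r : ℝ) (A : Matrix m n (Polynomial ℝ)) (z : ℂ) :
    evalC (r • A) z = r • evalC A z := by
  ext i j; simp [evalC]

lemma aux_evalC_mul {m n p : Type*} [Fintype n] (A : Matrix m n (Polynomial ℝ))
    (B : Matrix n p (Polynomial ℝ)) (z : ℂ) :
    evalC (A * B) z = evalC A z * evalC B z := by
  ext i j; simp [evalC, Matrix.mul_apply]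

lemma aux_evalC_mapC {m n : Type*} (K : Matrix m n ℝ) (z : ℂ) :
    evalC (K.map Polynomial.C) z = K.map (fun x => (x : ℂ)) := by
  ext i j; simp [evalC, Matrix.map_apply]

lemma aux_starT_sub {m n : Type*} (A B : Matrix m n (Polynomial ℝ)) :
    starT (A - B) = starT A - starT B := by
  ext i j; simp [starT, Polynomial.sub_comp]

lemma aux_starT_smul {m n : Type*} (r : ℝ) (A : Matrix m n (Polynomial ℝ)) :
    starT (r • A) = r • starT A := by
  ext i j; simp [starT, Polynomial.smul_comp]

lemma aux_starT_mul {m n p : Type*} [Fintype n] (A : Matrix m n (Polynomial ℝ))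
    (B : Matrix n p (Polynomial ℝ)) :
    starT (A * B) = starT B * starT A := by
  apply Matrix.ext; intro i j
  simp only [starT, Matrix.of_apply, Matrix.mul_apply]
  have hx : ∀ q : Polynomial ℝ, q.comp (-Polynomial.X) = negX q := fun _ => rfl
  simp only [hx, map_sum, _root_.map_mul]
  exact Finset.sum_congr rfl fun k _ => mul_comm _ _

lemma aux_starT_mapC {m n : Type*} (K : Matrix m n ℝ) :
    starT (K.map Polynomial.C) = Kᵀ.map Polynomial.C := by
  ext i j; simp [starT, Matrix.map_apply]

/-! ### rank under right multiplication by an invertible matrix -/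

lemma aux_rank_mul_right_of_inv {k l : Type*} [Fintype k] [Fintype l] [DecidableEq l]
    (M : Matrix k l ℂ) (T T' : Matrix l l ℂ) (h : T * T' = 1) :
    (M * T).rank = M.rank := by
  refine le_antisymm (Matrix.rank_mul_le_left M T) ?_
  have hM : M = M * T * T' := by rw [Matrix.mul_assoc, h, Matrix.mul_one]
  calc M.rank = (M * T * T').rank := by rw [← hM]
    _ ≤ (M * T).rank := Matrix.rank_mul_le_left _ _

/-! ### auxiliary lemmas on `ratM` and `ratOf` -/

lemma aux_ratM_sub {m n : Type*} (A B : Matrix m n (Polynomial ℝ)) :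
    ratM (A - B) = ratM A - ratM B := by
  ext i j; simp [ratM, Matrix.map_apply]

lemma aux_ratM_mul {m n p : Type*} [Fintype n] (A : Matrix m n (Polynomial ℝ))
    (B : Matrix n p (Polynomial ℝ)) :
    ratM (A * B) = ratM A * ratM B := by
  ext i j; simp [ratM, Matrix.map_apply, Matrix.mul_apply]

lemma aux_algebraMap_C (x : ℝ) :
    algebraMap (Polynomial ℝ) (RatFunc ℝ) (Polynomial.C x) = algebraMap ℝ (RatFunc ℝ) x := by
  rw [IsScalarTower.algebraMap_apply ℝ (Polynomial ℝ) (RatFunc ℝ)]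
  rfl

lemma aux_ratM_smul {m n : Type*} (r : ℝ) (A : Matrix m n (Polynomial ℝ)) :
    ratM (r • A) = r • ratM A := by
  ext i j
  simp only [ratM, Matrix.map_apply, Matrix.smul_apply]
  rw [Polynomial.smul_eq_C_mul, _root_.map_mul, aux_algebraMap_C, Algebra.smul_def]

lemma aux_ratM_mapC {m n : Type*} (K : Matrix m n ℝ) :
    ratM (K.map Polynomial.C) = ratOf K := by
  ext i j
  simp only [ratM, ratOf, Matrix.map_apply]
  exact aux_algebraMap_C _

end Aux

theorem statement11 {n : ℕ} (P Q : Matrix (Fin n) (Fin n) (Polynomial ℝ))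
    (hpr : PosRealPair P Q) (hQ : Q.det ≠ 0)
    (hprop : ProperM ((ratM Q)⁻¹ * ratM P))
    (D₀ : Matrix (Fin n) (Fin n) ℝ) (hD₀ : D₀ = limM ((ratM Q)⁻¹ * ratM P)) :
    PosRealPair (P - (1 / 2 : ℝ) • (Q * ((D₀ - D₀ᵀ).map Polynomial.C))) Q ∧
    ProperM ((ratM Q)⁻¹ * ratM (P - (1 / 2 : ℝ) • (Q * ((D₀ - D₀ᵀ).map Polynomial.C)))) ∧
    limM ((ratM Q)⁻¹ * ratM (P - (1 / 2 : ℝ) • (Q * ((D₀ - D₀ᵀ).map Polynomial.C)))) =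
      (1 / 2 : ℝ) • (D₀ + D₀ᵀ) ∧
    ((1 / 2 : ℝ) • (D₀ + D₀ᵀ)).IsSymm := by
  set K : Matrix (Fin n) (Fin n) ℝ := D₀ - D₀ᵀ with hK
  have hKc : (K.map (fun x => (x : ℂ)))ᵀ = -(K.map fun x => (x : ℂ)) := by
    ext i j
    simp [hK, Matrix.map_apply]
  have hP' : ∀ z : ℂ, evalC (P - (1/2:ℝ) • (Q * (K.map Polynomial.C))) z
      = evalC P z - (1/2:ℝ) • (evalC Q z * K.map (fun x => (x : ℂ))) := by
    intro z
    rw [aux_evalC_sub, aux_evalC_smul, aux_evalC_mul, aux_evalC_mapC]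
  set Tz : Matrix (Fin n ⊕ Fin n) (Fin n ⊕ Fin n) ℂ :=
    Matrix.fromBlocks 1 0 ((1/2:ℝ) • (K.map (fun x => (x : ℂ)))) 1 with hTz
  set Tz' : Matrix (Fin n ⊕ Fin n) (Fin n ⊕ Fin n) ℂ :=
    Matrix.fromBlocks 1 0 (-((1/2:ℝ) • (K.map (fun x => (x : ℂ))))) 1 with hTz'
  have hTT : Tz * Tz' = 1 := by
    rw [hTz, hTz', Matrix.fromBlocks_multiply]
    simp [← Matrix.fromBlocks_one]
  have hfac : ∀ z : ℂ,
      Matrix.fromCols (evalC (P - (1/2:ℝ) • (Q * (K.map Polynomial.C))) z) (-(evalC Q z))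
        = Matrix.fromCols (evalC P z) (-(evalC Q z)) * Tz := by
    intro z
    rw [hTz, Matrix.fromCols_mul_fromBlocks, Matrix.mul_one, Matrix.mul_zero, zero_add,
      Matrix.mul_one, hP']
    congr 1
    all_goals simp [Matrix.mul_smul, Matrix.neg_mul, smul_neg, sub_eq_add_neg]
  refine ⟨⟨?_, ?_, ?_⟩, ?_⟩
  · -- condition (a)
    intro z hz
    have heq : evalC (P - (1/2:ℝ) • (Q * (K.map Polynomial.C))) z *
          (evalC Q ((starRingEnd ℂ) z))ᵀ +
        evalC Q z * (evalC (P - (1/2:ℝ) • (Q * (K.map Polynomial.C))) ((starRingEnd ℂ) z))ᵀ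
        = evalC P z * (evalC Q ((starRingEnd ℂ) z))ᵀ +
            evalC Q z * (evalC P ((starRingEnd ℂ) z))ᵀ := by
      rw [hP', hP']
      simp only [Matrix.transpose_sub, Matrix.transpose_smul, Matrix.transpose_mul, hKc,
        Matrix.sub_mul, Matrix.mul_sub, Matrix.mul_add, Matrix.add_mul, Matrix.smul_mul,
        Matrix.mul_smul, Matrix.neg_mul, Matrix.mul_neg, smul_neg, sub_neg_eq_add,
        Matrix.mul_assoc]
      abel
    rw [heq]
    exact hpr.1 z hz
  · -- condition (b)
    intro z hz
    rw [hfac z, aux_rank_mul_right_of_inv _ _ _ hTT]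
    exact hpr.2.1 z hz
  · -- condition (c)
    intro p z hp1 hp2
    have hKpC : Kᵀ.map Polynomial.C = -(K.map Polynomial.C) := by
      ext i j
      simp [hK, Matrix.map_apply]
    have hpoly : (P - (1/2:ℝ) • (Q * (K.map Polynomial.C))) * starT Q +
        Q * starT (P - (1/2:ℝ) • (Q * (K.map Polynomial.C)))
        = P * starT Q + Q * starT P := by
      rw [aux_starT_sub, aux_starT_smul, aux_starT_mul, aux_starT_mapC, hKpC]
      simp only [Matrix.mul_sub, Matrix.sub_mul, Matrix.mul_add, Matrix.add_mul,
        Matrix.mul_smul, Matrix.smul_mul, Matrix.neg_mul, Matrix.mul_neg, smul_neg,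
        sub_neg_eq_add, Matrix.mul_assoc]
      abel
    rw [hpoly] at hp1
    rw [hfac z, ← Matrix.vecMul_vecMul] at hp2
    have h3 := congrArg (fun v => v ᵥ* Tz') hp2
    simp only [Matrix.vecMul_vecMul, Matrix.mul_assoc, hTT, Matrix.mul_one,
      Matrix.vecMul_one, Matrix.zero_vecMul] at h3
    exact hpr.2.2 p z hp1 h3
  · -- properness, limit, symmetry
    have hdet : IsUnit (ratM Q).det := by
      have hd : (ratM Q).det = algebraMap (Polynomial ℝ) (RatFunc ℝ) Q.det := by
        rw [RingHom.map_det]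
        rfl
      rw [hd, isUnit_iff_ne_zero]
      exact RatFunc.algebraMap_ne_zero hQ
    have hGmat : (ratM Q)⁻¹ * ratM (P - (1/2:ℝ) • (Q * (K.map Polynomial.C)))
        = (ratM Q)⁻¹ * ratM P - (1/2:ℝ) • ratOf K := by
      rw [aux_ratM_sub, aux_ratM_smul, aux_ratM_mul, aux_ratM_mapC, Matrix.mul_sub,
        Matrix.mul_smul, ← Matrix.mul_assoc, Matrix.nonsing_inv_mul _ hdet, Matrix.one_mul]
    have hentry : ∀ i j, ((ratM Q)⁻¹ * ratM (P - (1/2:ℝ) • (Q * (K.map Polynomial.C)))) i j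
        = ((ratM Q)⁻¹ * ratM P) i j - algebraMap ℝ (RatFunc ℝ) ((1/2) * K i j) := by
      intro i j
      rw [hGmat]
      simp only [Matrix.sub_apply, Matrix.smul_apply, ratOf, Matrix.map_apply]
      rw [_root_.map_mul, ← Algebra.smul_def]
    refine ⟨?_, ?_, ?_⟩
    · intro i j
      rw [hentry i j]
      exact aux_ratProper_sub_const _ (hprop i j)
    · ext i j
      have h1 : limM ((ratM Q)⁻¹ * ratM (P - (1/2:ℝ) • (Q * (K.map Polynomial.C)))) i j
          = ratLimInf (((ratM Q)⁻¹ * ratM (P - (1/2:ℝ) • (Q * (K.map Polynomial.C)))) i j) := rfl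
      rw [h1, hentry i j, aux_ratLimInf_sub_const _ (hprop i j)]
      have h2 : ratLimInf (((ratM Q)⁻¹ * ratM P) i j) = D₀ i j := by rw [hD₀]; rfl
      rw [h2]
      simp only [Matrix.smul_apply, Matrix.add_apply, Matrix.transpose_apply, hK,
        Matrix.sub_apply, smul_eq_mul]
      ring
    · ext i j
      simp only [Matrix.IsSymm, Matrix.transpose_smul]
      simp [Matrix.transpose_apply, add_comm]
end
end

section
/- Let P, Q ∈ ℝ^{n×n}[ξ], let Y ∈ ℝ^{n×n}[ξ] be unimodular, and let S ∈ ℝ^{2n×2n} be nonsingular with S·J·Sᵀ = Σ, where J := ½[[0, I_n],[I_n, 0]] and Σ := [[I_n, 0],[0, −I_n]]. Define P̂, Q̂ ∈ ℝ^{n×n}[ξ] by [P̂ −Q̂] := Y·[P −Q]·S. Then (P,Q) is a bounded-real pair if and only if (P̂,Q̂) is a positive-real pair. -/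
open MeasureTheory Matrix Polynomial
open scoped ComplexOrder

noncomputable section

/-- bounded-real pair of polynomial matrices -/
def BoundedRealPair {k l : Type*} [Fintype k] [DecidableEq k] [Fintype l]
    (P : Matrix k l (Polynomial ℝ)) (Q : Matrix k k (Polynomial ℝ)) : Prop :=
  (∀ z : ℂ, 0 ≤ z.re →
      (evalC Q z * (evalC Q ((starRingEnd ℂ) z))ᵀ -
        evalC P z * (evalC P ((starRingEnd ℂ) z))ᵀ).PosSemidef) ∧
  (∀ z : ℂ, 0 ≤ z.re →
      (Matrix.fromCols (evalC P z) (-(evalC Q z))).rank = Fintype.card k) ∧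
  (∀ (p : k → Polynomial ℝ) (z : ℂ),
      Matrix.vecMul p (Q * starT Q - P * starT P) = 0 →
      Matrix.vecMul (fun i => Polynomial.aeval z (p i))
        (Matrix.fromCols (evalC P z) (-(evalC Q z))) = 0 →
      (fun i => Polynomial.aeval z (p i)) = (0 : k → ℂ))

namespace Aux14

/-- the substitution `ξ ↦ -ξ` as a ring hom -/
def sig : Polynomial ℝ →+* Polynomial ℝ :=
  (Polynomial.aeval (-(Polynomial.X : Polynomial ℝ))).toRingHom

lemma sig_apply (p : Polynomial ℝ) : sig p = p.comp (-Polynomial.X) := by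
  simp [sig, Polynomial.aeval_def, Polynomial.comp, Polynomial.algebraMap_eq]

lemma starT_eq {m n : Type*} (A : Matrix m n (Polynomial ℝ)) :
    starT A = (A.map sig)ᵀ := by
  ext i j; simp [starT, Matrix.map, sig_apply]

lemma sig_C (r : ℝ) : sig (Polynomial.C r) = Polynomial.C r := by
  simp [sig_apply]

lemma starT_mul {m k l : Type*} [Fintype k]
    (A : Matrix m k (Polynomial ℝ)) (B : Matrix k l (Polynomial ℝ)) :
    starT (A * B) = starT B * starT A := by
  rw [starT_eq, starT_eq, starT_eq, Matrix.map_mul, Matrix.transpose_mul]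

lemma starT_neg {m k : Type*} (A : Matrix m k (Polynomial ℝ)) :
    starT (-A) = -(starT A) := by
  ext i j; simp [starT]

lemma starT_fromColumns {m k l : Type*} (A : Matrix m k (Polynomial ℝ))
    (B : Matrix m l (Polynomial ℝ)) :
    starT (Matrix.fromCols A B) = Matrix.fromRows (starT A) (starT B) := by
  ext (i | i) j <;> rfl

lemma starT_map_C {m k : Type*} (A : Matrix m k ℝ) :
    starT (A.map Polynomial.C) = Aᵀ.map Polynomial.C := by
  ext i j; simp [starT, Matrix.map]

lemma det_starT {k : Type*} [Fintype k] [DecidableEq k] (A : Matrix k k (Polynomial ℝ)) :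
    (starT A).det = sig A.det := by
  rw [starT_eq, Matrix.det_transpose, RingHom.map_det sig A]; rfl


/-- evaluation as a ring hom -/
def ev (z : ℂ) : Polynomial ℝ →+* ℂ := (Polynomial.aeval z).toRingHom

lemma evalC_eq {m k : Type*} (A : Matrix m k (Polynomial ℝ)) (z : ℂ) :
    evalC A z = A.map (ev z) := rfl

lemma evalC_mul {m k l : Type*} [Fintype k] (A : Matrix m k (Polynomial ℝ))
    (B : Matrix k l (Polynomial ℝ)) (z : ℂ) :
    evalC (A * B) z = evalC A z * evalC B z := by
  rw [evalC_eq, evalC_eq, evalC_eq, Matrix.map_mul]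

lemma evalC_neg {m k : Type*} (A : Matrix m k (Polynomial ℝ)) (z : ℂ) :
    evalC (-A) z = -(evalC A z) := by
  ext i j; simp [evalC]

lemma evalC_one {k : Type*} [Fintype k] [DecidableEq k] (z : ℂ) :
    evalC (1 : Matrix k k (Polynomial ℝ)) z = 1 := by
  rw [evalC_eq]; exact Matrix.map_one _ (map_zero _) (map_one _)

lemma evalC_fromColumns {m k l : Type*} (A : Matrix m k (Polynomial ℝ))
    (B : Matrix m l (Polynomial ℝ)) (z : ℂ) :
    evalC (Matrix.fromCols A B) z = Matrix.fromCols (evalC A z) (evalC B z) := by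
  ext i (j | j) <;> rfl

lemma evalC_map_C {m k : Type*} (A : Matrix m k ℝ) (z : ℂ) :
    evalC (A.map Polynomial.C) z = A.map (algebraMap ℝ ℂ) := by
  ext i j; simp [evalC, Matrix.map]

lemma aeval_conj (p : Polynomial ℝ) (z : ℂ) :
    Polynomial.aeval ((starRingEnd ℂ) z) p = (starRingEnd ℂ) (Polynomial.aeval z p) := by
  simpa using Polynomial.aeval_algHom_apply Complex.conjAe z p

lemma evalC_conjTranspose {m k : Type*} (A : Matrix m k (Polynomial ℝ)) (z : ℂ) :
    (evalC A z)ᴴ = (evalC A ((starRingEnd ℂ) z))ᵀ := by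
  ext i j; simp [evalC, Matrix.conjTranspose_apply, aeval_conj]

lemma det_evalC {k : Type*} [Fintype k] [DecidableEq k]
    (A : Matrix k k (Polynomial ℝ)) (z : ℂ) :
    (evalC A z).det = Polynomial.aeval z A.det := by
  rw [evalC_eq]; exact (RingHom.map_det (ev z) A).symm

section Key

variable {R : Type*} [CommRing R] {k : Type*} [Fintype k] [DecidableEq k]

/-- core block algebra computation -/
lemma block_E (a b c d : Matrix k k R) :
    Matrix.fromCols a (-b) * (Matrix.fromBlocks (0 : Matrix k k R) 1 1 0 : Matrix (k ⊕ k) (k ⊕ k) R) *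
      Matrix.fromRows c (-d) = -(a * d + b * c) := by
  rw [Matrix.fromCols_mul_fromBlocks, Matrix.fromCols_mul_fromRows]
  simp [Matrix.mul_neg]

lemma block_Sigma (a b c d : Matrix k k R) :
    Matrix.fromCols a (-b) * (Matrix.fromBlocks (1 : Matrix k k R) 0 0 (-1) : Matrix (k ⊕ k) (k ⊕ k) R) *
      Matrix.fromRows c (-d) = a * c - b * d := by
  rw [Matrix.fromCols_mul_fromBlocks, Matrix.fromCols_mul_fromRows]
  simp [Matrix.mul_neg, Matrix.neg_mul]
  abel

/-- the key congruence identity -/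
lemma key {P Q Ph Qh Y P' Q' Ph' Qh' Y' : Matrix k k R}
    {s : Matrix (k ⊕ k) (k ⊕ k) R}
    (hs : s * Matrix.fromBlocks (0 : Matrix k k R) 1 1 0 * sᵀ =
      Matrix.fromBlocks 1 0 0 (-1) + Matrix.fromBlocks 1 0 0 (-1))
    (h : Matrix.fromCols Ph (-Qh) = Y * Matrix.fromCols P (-Q) * s)
    (h' : Matrix.fromRows Ph' (-Qh') = sᵀ * Matrix.fromRows P' (-Q') * Y') :
    Ph * Qh' + Qh * Ph' =
      Y * ((Q * Q' - P * P') * Y') + Y * ((Q * Q' - P * P') * Y') := by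
  have e1 : Matrix.fromCols Ph (-Qh) * (Matrix.fromBlocks (0 : Matrix k k R) 1 1 0 : Matrix (k ⊕ k) (k ⊕ k) R) *
      Matrix.fromRows Ph' (-Qh') = -(Ph * Qh' + Qh * Ph') := block_E _ _ _ _
  rw [h, h'] at e1
  have e2 : Y * Matrix.fromCols P (-Q) * s * (Matrix.fromBlocks (0 : Matrix k k R) 1 1 0 : Matrix (k ⊕ k) (k ⊕ k) R) *
      (sᵀ * Matrix.fromRows P' (-Q') * Y') =
      Y * ((Matrix.fromCols P (-Q) * (s * Matrix.fromBlocks (0 : Matrix k k R) 1 1 0 * sᵀ) *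
        Matrix.fromRows P' (-Q')) * Y') := by
    simp only [Matrix.mul_assoc]
  rw [e2, hs] at e1
  have e3 : Matrix.fromCols P (-Q) *
      ((Matrix.fromBlocks (1 : Matrix k k R) 0 0 (-1) : Matrix (k ⊕ k) (k ⊕ k) R) + Matrix.fromBlocks 1 0 0 (-1)) *
      Matrix.fromRows P' (-Q') = (P * P' - Q * Q') + (P * P' - Q * Q') := by
    rw [Matrix.mul_add, Matrix.add_mul, block_Sigma]
  rw [e3] at e1
  have h4 : -(Y * ((P * P' - Q * Q' + (P * P' - Q * Q')) * Y')) = Ph * Qh' + Qh * Ph' := by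
    rw [e1, neg_neg]
  rw [← h4]
  noncomm_ring

end Key


section Map

variable {R : Type*} [CommRing R] {k : Type*} [Fintype k] [DecidableEq k]

lemma map_E (f : ℝ →+* R) :
    (Matrix.fromBlocks (0 : Matrix k k ℝ) (1 : Matrix k k ℝ) (1 : Matrix k k ℝ)
      (0 : Matrix k k ℝ)).map f =
      Matrix.fromBlocks (0 : Matrix k k R) (1 : Matrix k k R) (1 : Matrix k k R)
        (0 : Matrix k k R) := by
  ext (i | i) (j | j) <;>
    simp [Matrix.map_apply, Matrix.one_apply, apply_ite f, map_zero f, map_one f]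

lemma map_Sigma (f : ℝ →+* R) :
    (Matrix.fromBlocks (1 : Matrix k k ℝ) (0 : Matrix k k ℝ) (0 : Matrix k k ℝ)
      (-1 : Matrix k k ℝ)).map f =
      Matrix.fromBlocks (1 : Matrix k k R) (0 : Matrix k k R) (0 : Matrix k k R)
        (-1 : Matrix k k R) := by
  ext (i | i) (j | j) <;>
    simp [Matrix.map_apply, Matrix.one_apply, Matrix.neg_apply, apply_ite f, map_zero f,
      map_one f, map_neg f]

lemma hs_map (f : ℝ →+* R) {S : Matrix (k ⊕ k) (k ⊕ k) ℝ}
    (hs : S * Matrix.fromBlocks (0 : Matrix k k ℝ) 1 1 0 * Sᵀ =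
      Matrix.fromBlocks 1 0 0 (-1) + Matrix.fromBlocks 1 0 0 (-1)) :
    (S.map f) * Matrix.fromBlocks (0 : Matrix k k R) 1 1 0 * (S.map f)ᵀ =
      Matrix.fromBlocks 1 0 0 (-1) + Matrix.fromBlocks 1 0 0 (-1) := by
  have h1 : ((S * Matrix.fromBlocks (0 : Matrix k k ℝ) 1 1 0 * Sᵀ).map f) =
      (S.map f) * Matrix.fromBlocks (0 : Matrix k k R) 1 1 0 * (S.map f)ᵀ := by
    rw [Matrix.map_mul, Matrix.map_mul, map_E f, Matrix.transpose_map]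
  have h2 : ((Matrix.fromBlocks (1 : Matrix k k ℝ) (0 : Matrix k k ℝ) (0 : Matrix k k ℝ)
      (-1 : Matrix k k ℝ) +
      Matrix.fromBlocks (1 : Matrix k k ℝ) (0 : Matrix k k ℝ) (0 : Matrix k k ℝ)
      (-1 : Matrix k k ℝ)).map f) =
      (Matrix.fromBlocks (1 : Matrix k k R) 0 0 (-1) + Matrix.fromBlocks 1 0 0 (-1)) := by
    rw [Matrix.map_add f (map_add f), map_Sigma f]
  rw [← h1, hs, h2]

lemma vecMul_cancel {A : Matrix k k R} (hA : IsUnit A.det) {v : k → R}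
    (h : Matrix.vecMul v A = 0) : v = 0 := by
  have h2 := congrArg (fun w => Matrix.vecMul w A⁻¹) h
  simpa [Matrix.vecMul_vecMul, Matrix.mul_nonsing_inv A hA] using h2

end Map

section PSD

variable {k : Type*} [Fintype k]

lemma posSemidef_of_add_self {A : Matrix k k ℂ} (hH : A.IsHermitian)
    (h : (A + A).PosSemidef) : A.PosSemidef := by
  refine Matrix.PosSemidef.of_dotProduct_mulVec_nonneg hH fun x => ?_
  have h2 := h.dotProduct_mulVec_nonneg x
  rw [Matrix.add_mulVec, dotProduct_add] at h2
  rw [Complex.le_def] at h2 ⊢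
  simp only [Complex.add_re, Complex.add_im, Complex.zero_re, Complex.zero_im] at h2 ⊢
  constructor <;> [linarith [h2.1]; linarith [h2.2]]

lemma herm_pair {m : Type*} [Fintype m] (A : Matrix k m (Polynomial ℝ))
    (B : Matrix k m (Polynomial ℝ)) (z : ℂ) :
    (evalC A z * (evalC B ((starRingEnd ℂ) z))ᵀ)ᴴ =
      evalC B z * (evalC A ((starRingEnd ℂ) z))ᵀ := by
  ext i j
  simp only [Matrix.conjTranspose_apply, Matrix.mul_apply, Matrix.transpose_apply, evalC,
    Matrix.of_apply, star_sum, star_mul', Complex.star_def, ← aeval_conj, Complex.conj_conj]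
  exact Finset.sum_congr rfl fun t _ => mul_comm _ _

end PSD


section Limit

lemma nonneg_of_right_limit {g : ℝ → ℂ} (hg : Continuous g)
    (h : ∀ t : ℝ, 0 < t → 0 ≤ g t) : 0 ≤ g 0 := by
  have hfilter : Filter.Tendsto g (nhdsWithin 0 (Set.Ioi 0)) (nhds (g 0)) :=
    (hg.tendsto 0).mono_left nhdsWithin_le_nhds
  have hre : Filter.Tendsto (fun t => (g t).re) (nhdsWithin 0 (Set.Ioi 0))
      (nhds ((g 0).re)) := (Complex.continuous_re.tendsto _).comp hfilter
  have him : Filter.Tendsto (fun t => (g t).im) (nhdsWithin 0 (Set.Ioi 0))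
      (nhds ((g 0).im)) := (Complex.continuous_im.tendsto _).comp hfilter
  rw [Complex.le_def]
  constructor
  · refine ge_of_tendsto hre ?_
    filter_upwards [self_mem_nhdsWithin] with t ht
    exact ((Complex.le_def.mp (h t ht)).1 : (0:ℂ).re ≤ (g t).re)
  · have him0 : Filter.Tendsto (fun t => (g t).im) (nhdsWithin 0 (Set.Ioi 0))
        (nhds 0) := by
      refine Filter.Tendsto.congr' ?_ tendsto_const_nhds
      filter_upwards [self_mem_nhdsWithin] with t ht
      exact ((Complex.le_def.mp (h t ht)).2).symm ▸ ((Complex.le_def.mp (h t ht)).2).symm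
    have := tendsto_nhds_unique him him0
    simp [this]

lemma continuous_evalC {k m : Type*} [Fintype k] [Fintype m]
    (A : Matrix k m (Polynomial ℝ)) : Continuous fun z : ℂ => evalC A z :=
  continuous_matrix fun i j => Polynomial.continuous_aeval (A i j)

end Limit

end Aux14

open Aux14

theorem statement14 {n : ℕ} (P Q Phat Qhat : Matrix (Fin n) (Fin n) (Polynomial ℝ))
    (Y : Matrix (Fin n) (Fin n) (Polynomial ℝ))
    (hY : ∃ c : ℝ, c ≠ 0 ∧ Y.det = Polynomial.C c)
    (S : Matrix (Fin n ⊕ Fin n) (Fin n ⊕ Fin n) ℝ) (hS : IsUnit S.det)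
    (hSJS : S * ((1 / 2 : ℝ) • Matrix.fromBlocks (0 : Matrix (Fin n) (Fin n) ℝ) 1 1 0) * Sᵀ =
      Matrix.fromBlocks 1 0 0 (-1))
    (hPQ : Matrix.fromCols Phat (-Qhat) =
      Y * Matrix.fromCols P (-Q) * S.map Polynomial.C) :
    BoundedRealPair P Q ↔ PosRealPair Phat Qhat := by
  classical
  obtain ⟨c, hc, hdet⟩ := hY
  -- unit facts
  have hYu : IsUnit Y.det := by rw [hdet]; exact Polynomial.isUnit_C.mpr hc.isUnit
  have hstarYu : IsUnit (starT Y).det := by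
    rw [det_starT, hdet, sig_C]; exact Polynomial.isUnit_C.mpr hc.isUnit
  have hYz : ∀ z : ℂ, IsUnit (evalC Y z).det := by
    intro z
    rw [det_evalC, hdet]
    simp only [Polynomial.aeval_C]
    exact isUnit_iff_ne_zero.mpr (by
      simpa using Complex.ofReal_ne_zero.mpr hc)
  have hScu : IsUnit ((S.map (algebraMap ℝ ℂ)).det) := by
    rw [show ((S.map (algebraMap ℝ ℂ)).det) = algebraMap ℝ ℂ S.det from
      (RingHom.map_det _ S).symm]
    exact hS.map (algebraMap ℝ ℂ)
  -- normalized symplectic relation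
  have hs2 : S * Matrix.fromBlocks (0 : Matrix (Fin n) (Fin n) ℝ) 1 1 0 * Sᵀ =
      Matrix.fromBlocks 1 0 0 (-1) + Matrix.fromBlocks 1 0 0 (-1) := by
    calc S * Matrix.fromBlocks (0 : Matrix (Fin n) (Fin n) ℝ) 1 1 0 * Sᵀ
        = (2:ℝ) • (S * ((1 / 2 : ℝ) •
            Matrix.fromBlocks (0 : Matrix (Fin n) (Fin n) ℝ) 1 1 0) * Sᵀ) := by
          rw [Matrix.mul_smul, Matrix.smul_mul, smul_smul]; norm_num
      _ = (2:ℝ) • Matrix.fromBlocks 1 0 0 (-1) := by rw [hSJS]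
      _ = _ := two_smul _ _
  have hsP := hs_map (Polynomial.C : ℝ →+* Polynomial ℝ) hs2
  have hsC := hs_map (algebraMap ℝ ℂ) hs2
  -- polynomial-level identity
  have h_star : Matrix.fromRows (starT Phat) (-(starT Qhat)) =
      (S.map Polynomial.C)ᵀ * Matrix.fromRows (starT P) (-(starT Q)) * starT Y := by
    have h := congrArg starT hPQ
    rw [starT_fromColumns, starT_neg, starT_mul, starT_mul, starT_fromColumns, starT_neg,
      starT_map_C, Matrix.transpose_map, ← Matrix.mul_assoc] at h
    exact h
  have keyP : Phat * starT Qhat + Qhat * starT Phat =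
      Y * ((Q * starT Q - P * starT P) * starT Y) +
      Y * ((Q * starT Q - P * starT P) * starT Y) := key hsP hPQ h_star
  -- evaluated identities
  have h_z : ∀ z : ℂ, Matrix.fromCols (evalC Phat z) (-(evalC Qhat z)) =
      evalC Y z * Matrix.fromCols (evalC P z) (-(evalC Q z)) *
        S.map (algebraMap ℝ ℂ) := by
    intro z
    have h := congrArg (fun M => evalC M z) hPQ
    rw [evalC_fromColumns, evalC_neg, evalC_mul, evalC_mul, evalC_fromColumns, evalC_neg,
      evalC_map_C] at h
    exact h
  have h_rows : ∀ w : ℂ, Matrix.fromRows ((evalC Phat w)ᵀ) (-((evalC Qhat w)ᵀ)) =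
      (S.map (algebraMap ℝ ℂ))ᵀ * Matrix.fromRows ((evalC P w)ᵀ) (-((evalC Q w)ᵀ)) *
        (evalC Y w)ᵀ := by
    intro w
    have h := congrArg Matrix.transpose (h_z w)
    rw [Matrix.transpose_fromCols, Matrix.transpose_neg, Matrix.transpose_mul,
      Matrix.transpose_mul, Matrix.transpose_fromCols, Matrix.transpose_neg,
      ← Matrix.mul_assoc] at h
    exact h
  have keyC : ∀ z w : ℂ,
      evalC Phat z * (evalC Qhat w)ᵀ + evalC Qhat z * (evalC Phat w)ᵀ =
      evalC Y z * ((evalC Q z * (evalC Q w)ᵀ - evalC P z * (evalC P w)ᵀ) * (evalC Y w)ᵀ) +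
      evalC Y z * ((evalC Q z * (evalC Q w)ᵀ - evalC P z * (evalC P w)ᵀ) * (evalC Y w)ᵀ) :=
    fun z w => key hsC (h_z z) (h_rows w)
  -- rank transfer
  have rank_eq : ∀ z : ℂ,
      (Matrix.fromCols (evalC Phat z) (-(evalC Qhat z))).rank =
      (Matrix.fromCols (evalC P z) (-(evalC Q z))).rank := by
    intro z
    rw [h_z z, Matrix.rank_mul_eq_left_of_isUnit_det _ _ hScu,
      Matrix.rank_mul_eq_right_of_isUnit_det _ _ (hYz z)]
  constructor
  · rintro ⟨hBRa, hBRb, hBRc⟩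
    refine ⟨?_, ?_, ?_⟩
    · intro z hz
      rw [keyC z ((starRingEnd ℂ) z)]
      have hA := hBRa z (le_of_lt hz)
      have hYH : (evalC Y ((starRingEnd ℂ) z))ᵀ = (evalC Y z)ᴴ :=
        (evalC_conjTranspose Y z).symm
      rw [hYH]
      simp only [← Matrix.mul_assoc]
      exact Matrix.PosSemidef.add (hA.mul_mul_conjTranspose_same _)
        (hA.mul_mul_conjTranspose_same _)
    · intro z hz
      rw [rank_eq z]
      exact hBRb z hz
    · intro p z hpoly heval
      rw [keyP, Matrix.vecMul_add] at hpoly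
      have h1 : Matrix.vecMul p (Y * ((Q * starT Q - P * starT P) * starT Y)) = 0 := by
        funext i
        have h0 := congrFun hpoly i
        simp only [Pi.add_apply, Pi.zero_apply] at h0
        simpa using add_self_eq_zero.mp h0
      rw [← Matrix.vecMul_vecMul, ← Matrix.vecMul_vecMul] at h1
      have hq : Matrix.vecMul (Matrix.vecMul p Y) (Q * starT Q - P * starT P) = 0 :=
        vecMul_cancel hstarYu h1
      rw [h_z z, ← Matrix.vecMul_vecMul] at heval
      have h2 := vecMul_cancel hScu heval
      rw [← Matrix.vecMul_vecMul] at h2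
      have hqz : (fun i => Polynomial.aeval z ((Matrix.vecMul p Y) i)) =
          Matrix.vecMul (fun i => Polynomial.aeval z (p i)) (evalC Y z) := by
        funext i
        exact RingHom.map_vecMul (ev z) Y p i
      have h3 := hBRc (Matrix.vecMul p Y) z hq (by rw [hqz]; exact h2)
      rw [hqz] at h3
      exact vecMul_cancel (hYz z) h3
  · rintro ⟨hPRa, hPRb, hPRc⟩
    have interior : ∀ w : ℂ, 0 < w.re →
        (evalC Q w * (evalC Q ((starRingEnd ℂ) w))ᵀ -
          evalC P w * (evalC P ((starRingEnd ℂ) w))ᵀ).PosSemidef := by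
      intro w hw
      have hherm : (evalC Q w * (evalC Q ((starRingEnd ℂ) w))ᵀ -
          evalC P w * (evalC P ((starRingEnd ℂ) w))ᵀ).IsHermitian :=
        Matrix.IsHermitian.sub (herm_pair Q Q w) (herm_pair P P w)
      have hBB := hPRa w hw
      rw [keyC w ((starRingEnd ℂ) w)] at hBB
      have hYH : (evalC Y ((starRingEnd ℂ) w))ᵀ = (evalC Y w)ᴴ :=
        (evalC_conjTranspose Y w).symm
      rw [hYH] at hBB
      simp only [← Matrix.mul_assoc] at hBB
      have hBw := posSemidef_of_add_self
        (Matrix.isHermitian_mul_mul_conjTranspose _ hherm) hBB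
      have hdetH : IsUnit ((evalC Y w)ᴴ.det) := by
        rw [Matrix.det_conjTranspose]; exact (hYz w).star
      have hres := hBw.mul_mul_conjTranspose_same ((evalC Y w)⁻¹)
      rw [Matrix.conjTranspose_nonsing_inv] at hres
      have hinv : (evalC Y w)⁻¹ * (evalC Y w *
          (evalC Q w * (evalC Q ((starRingEnd ℂ) w))ᵀ -
            evalC P w * (evalC P ((starRingEnd ℂ) w))ᵀ) * (evalC Y w)ᴴ) * ((evalC Y w)ᴴ)⁻¹ =
          evalC Q w * (evalC Q ((starRingEnd ℂ) w))ᵀ -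
            evalC P w * (evalC P ((starRingEnd ℂ) w))ᵀ := by
        rw [← Matrix.mul_assoc, ← Matrix.mul_assoc, Matrix.nonsing_inv_mul _ (hYz w),
          Matrix.one_mul, Matrix.mul_assoc, Matrix.mul_nonsing_inv _ hdetH, Matrix.mul_one]
      rwa [hinv] at hres
    refine ⟨?_, ?_, ?_⟩
    · intro z hz
      refine Matrix.PosSemidef.of_dotProduct_mulVec_nonneg (Matrix.IsHermitian.sub (herm_pair Q Q z) (herm_pair P P z)) fun x => ?_
      have hzc : Continuous fun t : ℝ => z + (t : ℂ) :=
        continuous_const.add Complex.continuous_ofReal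
      have hzcc : Continuous fun t : ℝ => (starRingEnd ℂ) (z + (t : ℂ)) :=
        Complex.continuous_conj.comp hzc
      have hQ1 : Continuous fun t : ℝ => evalC Q (z + (t : ℂ)) :=
        (continuous_evalC Q).comp hzc
      have hQ2 : Continuous fun t : ℝ => evalC Q ((starRingEnd ℂ) (z + (t : ℂ))) :=
        (continuous_evalC Q).comp hzcc
      have hP1 : Continuous fun t : ℝ => evalC P (z + (t : ℂ)) :=
        (continuous_evalC P).comp hzc
      have hP2 : Continuous fun t : ℝ => evalC P ((starRingEnd ℂ) (z + (t : ℂ))) :=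
        (continuous_evalC P).comp hzcc
      have hcont : Continuous fun t : ℝ =>
          dotProduct (star x)
            ((evalC Q (z + (t : ℂ)) * (evalC Q ((starRingEnd ℂ) (z + (t : ℂ))))ᵀ -
              evalC P (z + (t : ℂ)) * (evalC P ((starRingEnd ℂ) (z + (t : ℂ))))ᵀ) *ᵥ x) :=
        continuous_const.dotProduct
          (((hQ1.matrix_mul hQ2.matrix_transpose).sub
            (hP1.matrix_mul hP2.matrix_transpose)).matrix_mulVec continuous_const)
      have hlim := nonneg_of_right_limit hcont (fun t ht =>
        (interior (z + (t : ℂ)) (by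
          simp only [Complex.add_re, Complex.ofReal_re]
          linarith)).dotProduct_mulVec_nonneg x)
      simpa using hlim
    · intro z hz
      rw [← rank_eq z]
      exact hPRb z hz
    · intro p z hpoly heval
      set q : Fin n → Polynomial ℝ := Matrix.vecMul p Y⁻¹ with hqdef
      have hqY : Matrix.vecMul q Y = p := by
        rw [hqdef, Matrix.vecMul_vecMul, Matrix.nonsing_inv_mul _ hYu, Matrix.vecMul_one]
      have hc1 : Matrix.vecMul q (Phat * starT Qhat + Qhat * starT Phat) = 0 := by
        rw [keyP, Matrix.vecMul_add]
        have hzero : Matrix.vecMul q (Y * ((Q * starT Q - P * starT P) * starT Y)) = 0 := by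
          rw [← Matrix.vecMul_vecMul, hqY, ← Matrix.vecMul_vecMul, hpoly, Matrix.zero_vecMul]
        rw [hzero, add_zero]
      have hqz : (fun i => Polynomial.aeval z (q i)) =
          Matrix.vecMul (fun i => Polynomial.aeval z (p i)) (evalC Y⁻¹ z) :=
        funext fun i => RingHom.map_vecMul (ev z) Y⁻¹ p i
      have hYinvY : evalC Y⁻¹ z * evalC Y z = 1 := by
        rw [← evalC_mul, Matrix.nonsing_inv_mul _ hYu, evalC_one]
      have hc2 : Matrix.vecMul (fun i => Polynomial.aeval z (q i))
          (Matrix.fromCols (evalC Phat z) (-(evalC Qhat z))) = 0 := by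
        rw [h_z z, hqz, Matrix.vecMul_vecMul, ← Matrix.mul_assoc, ← Matrix.mul_assoc,
          hYinvY, Matrix.one_mul, ← Matrix.vecMul_vecMul, heval, Matrix.zero_vecMul]
      have h3 := hPRc q z hc1 hc2
      have hpz : (fun i => Polynomial.aeval z (p i)) =
          Matrix.vecMul (fun i => Polynomial.aeval z (q i)) (evalC Y z) := by
        have h4 : (fun i => Polynomial.aeval z ((Matrix.vecMul q Y) i)) =
            Matrix.vecMul (fun i => Polynomial.aeval z (q i)) (evalC Y z) :=
          funext fun i => RingHom.map_vecMul (ev z) Y q i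
        rw [hqY] at h4
        exact h4
      rw [hpz, h3, Matrix.zero_vecMul]

end
end

section
/- Let Σ ∈ ℝ^{n×n} be a signature matrix (a diagonal matrix whose diagonal entries are each 1 or −1), let P, Q ∈ ℝ^{n×n}[ξ], and set Q̂ := ½(Q − PΣ) and P̂ := ½(PΣ + Q). Then (P,Q) is a bounded-real pair if and only if (P̂,Q̂) is a positive-real pair. -/
open MeasureTheory Matrix Polynomial
open scoped ComplexOrder

set_option linter.unusedSectionVars false

noncomputable section

/-- a signature matrix: diagonal with diagonal entries `±1` -/
def IsSignature {n : ℕ} (S : Matrix (Fin n) (Fin n) ℝ) : Prop :=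
  (∀ i j, i ≠ j → S i j = 0) ∧ ∀ i, S i i = 1 ∨ S i i = -1

section Helpers

variable {m n k : Type*} [Fintype m] [Fintype n] [Fintype k]

lemma evalC_eq_map (P : Matrix m n (Polynomial ℝ)) (z : ℂ) :
    evalC P z = P.map (Polynomial.aeval z) := rfl

lemma evalC_mul (A : Matrix m n (Polynomial ℝ)) (B : Matrix n k (Polynomial ℝ)) (z : ℂ) :
    evalC (A * B) z = evalC A z * evalC B z := by
  simp only [evalC_eq_map]
  exact Matrix.map_mul (f := (Polynomial.aeval z : Polynomial ℝ →ₐ[ℝ] ℂ).toRingHom)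

lemma evalC_add (A B : Matrix m n (Polynomial ℝ)) (z : ℂ) :
    evalC (A + B) z = evalC A z + evalC B z := by
  ext i j; simp [evalC]

lemma evalC_sub (A B : Matrix m n (Polynomial ℝ)) (z : ℂ) :
    evalC (A - B) z = evalC A z - evalC B z := by
  ext i j; simp [evalC]

lemma evalC_smul (r : ℝ) (A : Matrix m n (Polynomial ℝ)) (z : ℂ) :
    evalC (r • A) z = (r : ℂ) • evalC A z := by
  ext i j
  simp [evalC, Complex.real_smul]

lemma aeval_conj (p : Polynomial ℝ) (z : ℂ) :
    Polynomial.aeval ((starRingEnd ℂ) z) p = (starRingEnd ℂ) (Polynomial.aeval z p) := by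
  rw [Polynomial.aeval_def, Polynomial.aeval_def, Polynomial.hom_eval₂]
  congr 1
  ext r
  simp

lemma evalC_conj (A : Matrix m n (Polynomial ℝ)) (z : ℂ) :
    (evalC A ((starRingEnd ℂ) z))ᵀ = (evalC A z)ᴴ := by
  ext i j
  simp [evalC, Matrix.conjTranspose_apply, aeval_conj]

lemma starT_eq_map (A : Matrix m n (Polynomial ℝ)) :
    starT A = Aᵀ.map (Polynomial.aeval (-Polynomial.X : Polynomial ℝ)) := by
  ext i j; simp [starT, Polynomial.comp_eq_aeval]

lemma starT_mul (A : Matrix m n (Polynomial ℝ)) (B : Matrix n k (Polynomial ℝ)) :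
    starT (A * B) = starT B * starT A := by
  simp only [starT_eq_map, Matrix.transpose_mul]
  exact Matrix.map_mul (f := (Polynomial.aeval (-Polynomial.X : Polynomial ℝ)).toRingHom)

lemma starT_add (A B : Matrix m n (Polynomial ℝ)) : starT (A + B) = starT A + starT B := by
  ext i j; simp [starT]

lemma starT_sub (A B : Matrix m n (Polynomial ℝ)) : starT (A - B) = starT A - starT B := by
  ext i j; simp [starT]

lemma starT_smul (r : ℝ) (A : Matrix m n (Polynomial ℝ)) : starT (r • A) = r • starT A := by
  ext i j; simp [starT]

lemma quarter {K R : Type*} [Field K] [CharZero K] [Ring R] [Algebra K R]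
    (a a' q q' : R) :
    ((1/2:K) • (a + q)) * ((1/2:K) • (q' - a')) + ((1/2:K) • (q - a)) * ((1/2:K) • (a' + q'))
      = (1/2:K) • (q * q' - a * a') := by
  have h : (a + q) * (q' - a') + (q - a) * (a' + q')
      = (q * q' - a * a') + (q * q' - a * a') := by noncomm_ring
  rw [smul_mul_smul_comm, smul_mul_smul_comm, ← smul_add, h, ← two_smul K, smul_smul]
  norm_num

lemma vecMul_matrix_smul {R : Type*} [CommRing R] (c : R) (v : n → R) (M : Matrix n m R) :
    v ᵥ* (c • M) = c • (v ᵥ* M) := by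
  ext i
  simp only [Matrix.vecMul, dotProduct, Matrix.smul_apply, Pi.smul_apply, smul_eq_mul,
    Finset.mul_sum]
  exact Finset.sum_congr rfl fun j _ => by ring

lemma smul_posSemidef {M : Matrix k k ℂ} {c : ℂ}
    (hc : 0 ≤ c) (h : M.PosSemidef) : (c • M).PosSemidef := by
  have hcr : star c = c := by
    rw [Complex.star_def, Complex.conj_eq_iff_im]
    exact (Complex.le_def.1 hc).2.symm
  refine Matrix.PosSemidef.of_dotProduct_mulVec_nonneg ?_ fun x => ?_
  · show (c • M)ᴴ = c • M
    rw [Matrix.conjTranspose_smul, hcr, h.1]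
  · rw [Matrix.smul_mulVec, dotProduct_smul]
    exact mul_nonneg hc (h.dotProduct_mulVec_nonneg x)

lemma half_smul_posSemidef_iff (M : Matrix k k ℂ) :
    ((1/2 : ℂ) • M).PosSemidef ↔ M.PosSemidef := by
  constructor
  · intro h
    have := smul_posSemidef (c := 2) (by simp [Complex.le_def]) h
    rwa [smul_smul, show (2 : ℂ) * (1/2) = 1 by norm_num, one_smul] at this
  · exact smul_posSemidef (by norm_num [Complex.le_def])

lemma star_quad (M : Matrix k k ℂ) (hM : M.IsHermitian) (x : k → ℂ) :
    star (dotProduct (star x) (M.mulVec x)) = dotProduct (star x) (M.mulVec x) := by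
  simp only [dotProduct, Matrix.mulVec, Pi.star_apply, Finset.mul_sum]
  rw [star_sum, Finset.sum_comm]
  refine Finset.sum_congr rfl fun i _ => ?_
  rw [star_sum]
  refine Finset.sum_congr rfl fun j _ => ?_
  rw [star_mul', star_mul', star_star, hM.apply j i]
  ring

end Helpers

section Sig

variable {n : ℕ}

lemma sig_eq_diagonal {Sg : Matrix (Fin n) (Fin n) ℝ} (h : IsSignature Sg) :
    Sg = Matrix.diagonal (fun i => Sg i i) := by
  ext i j
  by_cases hij : i = j
  · subst hij; simp
  · simp [Matrix.diagonal_apply_ne _ hij, h.1 i j hij]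

lemma sig_mul_self {Sg : Matrix (Fin n) (Fin n) ℝ} (h : IsSignature Sg) :
    Sg * Sg = 1 := by
  rw [sig_eq_diagonal h, Matrix.diagonal_mul_diagonal]
  have : (fun i => Sg i i * Sg i i) = fun _ => (1:ℝ) := by
    funext i
    rcases h.2 i with h' | h' <;> rw [h'] <;> norm_num
  rw [this, Matrix.diagonal_one]

lemma sig_symm {Sg : Matrix (Fin n) (Fin n) ℝ} (h : IsSignature Sg) :
    ∀ i j, Sg j i = Sg i j := by
  intro i j
  by_cases hij : i = j
  · rw [hij]
  · rw [h.1 i j hij, h.1 j i (Ne.symm hij)]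

end Sig

/-- boundary positive semidefiniteness from interior positive semidefiniteness -/
lemma boundary_psd {k : Type*} [Fintype k] (P Q : Matrix k k (Polynomial ℝ))
    (h : ∀ w : ℂ, 0 < w.re →
      (evalC Q w * (evalC Q ((starRingEnd ℂ) w))ᵀ -
        evalC P w * (evalC P ((starRingEnd ℂ) w))ᵀ).PosSemidef) :
    ∀ z : ℂ, 0 ≤ z.re →
      (evalC Q z * (evalC Q ((starRingEnd ℂ) z))ᵀ -
        evalC P z * (evalC P ((starRingEnd ℂ) z))ᵀ).PosSemidef := by
  intro z hz
  set F : ℂ → Matrix k k ℂ := fun w =>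
    evalC Q w * (evalC Q ((starRingEnd ℂ) w))ᵀ - evalC P w * (evalC P ((starRingEnd ℂ) w))ᵀ
    with hF
  have hHerm : ∀ w : ℂ, (F w).IsHermitian := by
    intro w
    rw [hF]
    simp only [evalC_conj]
    exact (Matrix.isHermitian_mul_conjTranspose_self _).sub
      (Matrix.isHermitian_mul_conjTranspose_self _)
  refine Matrix.PosSemidef.of_dotProduct_mulVec_nonneg (hHerm z) fun x => ?_
  -- continuity of the quadratic form along the horizontal line through z
  set g : ℝ → ℂ := fun t => dotProduct (star x) ((F (z + t)).mulVec x) with hg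
  have hcont : Continuous g := by
    have haux : ∀ (A : Matrix k k (Polynomial ℝ)) (i j : k),
        Continuous fun t : ℝ => (evalC A (z + t) * (evalC A ((starRingEnd ℂ) (z + t)))ᵀ) i j := by
      intro A i j
      simp only [Matrix.mul_apply, evalC, Matrix.transpose_apply, Matrix.of_apply]
      refine continuous_finset_sum _ fun l _ => Continuous.mul ?_ ?_
      · exact (Polynomial.continuous_aeval (A i l)).comp
          (continuous_const.add Complex.continuous_ofReal)
      · exact (Polynomial.continuous_aeval (A j l)).comp
          (Complex.continuous_conj.comp (continuous_const.add Complex.continuous_ofReal))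
    rw [hg]
    simp only [dotProduct, Matrix.mulVec]
    refine continuous_finset_sum _ fun i _ => Continuous.mul continuous_const ?_
    refine continuous_finset_sum _ fun j _ => Continuous.mul ?_ continuous_const
    simp only [hF, Matrix.sub_apply]
    exact ((haux Q i j).sub (haux P i j))
  have hreal : ∀ t : ℝ, star (g t) = g t := fun t => star_quad _ (hHerm _) x
  have hpos : ∀ t : ℝ, 0 < t → 0 ≤ g t := by
    intro t ht
    have hre : 0 < (z + (t:ℂ)).re := by
      simp only [Complex.add_re, Complex.ofReal_re]
      linarith
    exact (h (z + t) hre).dotProduct_mulVec_nonneg x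
  have hg0 : g 0 = dotProduct (star x) ((F z).mulVec x) := by
    rw [hg]; norm_num
  rw [← hg0]
  rw [Complex.le_def]
  constructor
  · -- real part nonneg by taking the limit from the right
    have htend : Filter.Tendsto (fun t : ℝ => (g t).re) (nhdsWithin 0 (Set.Ioi 0))
        (nhds ((g 0).re)) := by
      exact ((Complex.continuous_re.comp hcont).continuousAt).continuousWithinAt
    have hev : ∀ᶠ t in nhdsWithin (0:ℝ) (Set.Ioi 0), (0:ℝ) ≤ (g t).re := by
      refine Filter.eventually_of_mem self_mem_nhdsWithin fun t ht => ?_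
      exact (Complex.le_def.1 (hpos t ht)).1
    simpa using ge_of_tendsto htend hev
  · have := hreal 0
    rw [Complex.star_def, Complex.conj_eq_iff_im] at this
    simp [this]

theorem statement15 {n : ℕ} (Sg : Matrix (Fin n) (Fin n) ℝ) (hSg : IsSignature Sg)
    (P Q : Matrix (Fin n) (Fin n) (Polynomial ℝ)) :
    BoundedRealPair P Q ↔
      PosRealPair ((1 / 2 : ℝ) • (P * Sg.map Polynomial.C + Q))
        ((1 / 2 : ℝ) • (Q - P * Sg.map Polynomial.C)) := by
  classical
  set S : Matrix (Fin n) (Fin n) (Polynomial ℝ) := Sg.map Polynomial.C with hS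
  set Ph : Matrix (Fin n) (Fin n) (Polynomial ℝ) := (1/2 : ℝ) • (P * S + Q) with hPh
  set Qh : Matrix (Fin n) (Fin n) (Polynomial ℝ) := (1/2 : ℝ) • (Q - P * S) with hQh
  -- basic facts about S
  have hSS : S * S = 1 := by
    rw [hS, ← Matrix.map_mul (f := (Polynomial.C : ℝ →+* Polynomial ℝ)), sig_mul_self hSg]
    exact Matrix.map_one _ (map_zero _) (map_one _)
  have hstS : starT S = S := by
    ext i j
    simp only [starT, Matrix.of_apply, hS, Matrix.map_apply, Polynomial.C_comp]
    rw [sig_symm hSg]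
  -- the complex version of S
  set Tc : Matrix (Fin n) (Fin n) ℂ := Sg.map (algebraMap ℝ ℂ) with hTc
  have hevalS : ∀ z : ℂ, evalC S z = Tc := by
    intro z
    ext i j
    simp [evalC, hS, hTc]
  have hTT : Tc * Tc = 1 := by
    rw [hTc, ← Matrix.map_mul (f := (algebraMap ℝ ℂ : ℝ →+* ℂ)), sig_mul_self hSg]
    exact Matrix.map_one _ (map_zero _) (map_one _)
  have hTH : Tcᴴ = Tc := by
    ext i j
    simp only [Matrix.conjTranspose_apply, hTc, Matrix.map_apply, Complex.coe_algebraMap,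
      Complex.star_def, Complex.conj_ofReal]
    rw [sig_symm hSg]
  -- the polynomial identity (Id1)
  have Id1 : Ph * starT Qh + Qh * starT Ph
      = (1/2 : ℝ) • (Q * starT Q - P * starT P) := by
    rw [hPh, hQh, starT_smul, starT_smul, starT_sub, starT_add, starT_mul, hstS]
    rw [quarter (K := ℝ) (P * S) (S * starT P) Q (starT Q)]
    congr 1
    refine congrArg (Q * starT Q - ·) ?_
    rw [Matrix.mul_assoc, ← Matrix.mul_assoc S, hSS, Matrix.one_mul]
  -- the complex identity (Id2)
  have Id2 : ∀ z : ℂ,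
      evalC Ph z * (evalC Qh ((starRingEnd ℂ) z))ᵀ +
        evalC Qh z * (evalC Ph ((starRingEnd ℂ) z))ᵀ
      = (1/2 : ℂ) • (evalC Q z * (evalC Q ((starRingEnd ℂ) z))ᵀ -
          evalC P z * (evalC P ((starRingEnd ℂ) z))ᵀ) := by
    intro z
    have hPhz : evalC Ph z = (1/2 : ℂ) • (evalC P z * Tc + evalC Q z) := by
      rw [hPh, evalC_smul, evalC_add, evalC_mul, hevalS]
      norm_num
    have hQhz : evalC Qh z = (1/2 : ℂ) • (evalC Q z - evalC P z * Tc) := by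
      rw [hQh, evalC_smul, evalC_sub, evalC_mul, hevalS]
      norm_num
    have hhalf : star ((1:ℂ)/2) = (1:ℂ)/2 := by
      rw [Complex.star_def, Complex.conj_eq_iff_im]
      norm_num
    simp only [evalC_conj]
    rw [hPhz, hQhz, Matrix.conjTranspose_smul, Matrix.conjTranspose_smul, hhalf,
      Matrix.conjTranspose_sub, Matrix.conjTranspose_add, Matrix.conjTranspose_mul, hTH]
    rw [quarter (K := ℂ) (evalC P z * Tc) (Tc * (evalC P z)ᴴ) (evalC Q z) ((evalC Q z)ᴴ)]
    congr 1
    refine congrArg (evalC Q z * (evalC Q z)ᴴ - ·) ?_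
    rw [Matrix.mul_assoc, ← Matrix.mul_assoc Tc, hTT, Matrix.one_mul]
  -- column-block identity
  set Mz : Matrix (Fin n ⊕ Fin n) (Fin n ⊕ Fin n) ℂ :=
    Matrix.fromBlocks ((1/2 : ℂ) • Tc) ((1/2 : ℂ) • Tc)
      (-((1/2 : ℂ) • (1 : Matrix (Fin n) (Fin n) ℂ))) ((1/2 : ℂ) • 1) with hMz
  set Nz : Matrix (Fin n ⊕ Fin n) (Fin n ⊕ Fin n) ℂ :=
    Matrix.fromBlocks Tc (-(1 : Matrix (Fin n) (Fin n) ℂ)) Tc 1 with hNz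
  have hhalf1 : ((1/2:ℂ) • (1 : Matrix (Fin n) (Fin n) ℂ)) + (1/2:ℂ) • 1 = 1 := by
    rw [← smul_add, ← two_smul ℂ, smul_smul]
    norm_num
  have hMN : Mz * Nz = 1 := by
    have TL : ((1/2:ℂ) • Tc) * Tc + ((1/2:ℂ) • Tc) * Tc = 1 := by
      rw [Matrix.smul_mul, hTT]
      exact hhalf1
    have TR : ((1/2:ℂ) • Tc) * (-(1 : Matrix (Fin n) (Fin n) ℂ)) + ((1/2:ℂ) • Tc) * 1 = 0 := by
      rw [Matrix.mul_neg, Matrix.mul_one]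
      exact neg_add_cancel _
    have BL : (-((1/2:ℂ) • (1 : Matrix (Fin n) (Fin n) ℂ))) * Tc + ((1/2:ℂ) • 1) * Tc = 0 := by
      rw [Matrix.neg_mul]
      exact neg_add_cancel _
    have BR : (-((1/2:ℂ) • (1 : Matrix (Fin n) (Fin n) ℂ))) * (-1) + ((1/2:ℂ) • 1) * 1 = 1 := by
      rw [Matrix.neg_mul, Matrix.mul_neg, neg_neg, Matrix.mul_one]
      exact hhalf1
    rw [hMz, hNz, Matrix.fromBlocks_multiply, TL, TR, BL, BR, Matrix.fromBlocks_one]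
  have hMzdet : IsUnit Mz.det := Matrix.isUnit_det_of_right_inverse hMN
  have hcol : ∀ z : ℂ,
      Matrix.fromCols (evalC Ph z) (-(evalC Qh z))
        = Matrix.fromCols (evalC P z) (-(evalC Q z)) * Mz := by
    intro z
    have hPhz : evalC Ph z = (1/2 : ℂ) • (evalC P z * Tc + evalC Q z) := by
      rw [hPh, evalC_smul, evalC_add, evalC_mul, hevalS]; norm_num
    have hQhz : evalC Qh z = (1/2 : ℂ) • (evalC Q z - evalC P z * Tc) := by
      rw [hQh, evalC_smul, evalC_sub, evalC_mul, hevalS]; norm_num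
    have h1 : evalC Ph z
        = evalC P z * ((1/2:ℂ) • Tc) + (-(evalC Q z)) * (-((1/2:ℂ) • 1)) := by
      rw [hPhz, smul_add, mul_smul_comm, Matrix.neg_mul, Matrix.mul_neg, neg_neg,
        mul_smul_comm, Matrix.mul_one]
    have h2 : -(evalC Qh z)
        = evalC P z * ((1/2:ℂ) • Tc) + (-(evalC Q z)) * ((1/2:ℂ) • 1) := by
      rw [hQhz, ← smul_neg, neg_sub, smul_sub, mul_smul_comm, Matrix.neg_mul,
        mul_smul_comm, Matrix.mul_one, sub_eq_add_neg]
    rw [hMz, Matrix.fromCols_mul_fromBlocks, ← h1, ← h2]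
  -- equality of ranks
  have hrank : ∀ z : ℂ,
      (Matrix.fromCols (evalC Ph z) (-(evalC Qh z))).rank
        = (Matrix.fromCols (evalC P z) (-(evalC Q z))).rank := by
    intro z
    rw [hcol z, Matrix.rank_mul_eq_left_of_isUnit_det Mz _ hMzdet]
  -- equivalence of vanishing of vecMul against the column blocks
  have hvec : ∀ (z : ℂ) (v : Fin n → ℂ),
      v ᵥ* Matrix.fromCols (evalC Ph z) (-(evalC Qh z)) = 0 ↔
      v ᵥ* Matrix.fromCols (evalC P z) (-(evalC Q z)) = 0 := by
    intro z v
    rw [hcol z, ← Matrix.vecMul_vecMul]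
    constructor
    · intro h
      have : (v ᵥ* Matrix.fromCols (evalC P z) (-(evalC Q z))) ᵥ* (Mz * Nz)
          = (0 : Fin n ⊕ Fin n → ℂ) ᵥ* Nz := by
        rw [← Matrix.vecMul_vecMul, h]
      rwa [hMN, Matrix.vecMul_one, Matrix.zero_vecMul] at this
    · intro h
      rw [h, Matrix.zero_vecMul]
  -- vanishing of the polynomial vecMul conditions
  have hpoly : ∀ p : Fin n → Polynomial ℝ,
      p ᵥ* (Ph * starT Qh + Qh * starT Ph) = 0 ↔
      p ᵥ* (Q * starT Q - P * starT P) = 0 := by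
    intro p
    rw [Id1]
    have : p ᵥ* ((1/2:ℝ) • (Q * starT Q - P * starT P))
        = (1/2:ℝ) • (p ᵥ* (Q * starT Q - P * starT P)) := by
      funext i
      simp only [Matrix.vecMul, dotProduct, Matrix.smul_apply, Pi.smul_apply]
      rw [Finset.smul_sum]
      exact Finset.sum_congr rfl fun j _ => mul_smul_comm _ _ _
    rw [this]
    constructor
    · intro h
      have := congrArg (fun v => (2:ℝ) • v) h
      simpa [smul_smul] using this
    · intro h; rw [h, smul_zero]
  constructor
  · rintro ⟨ha, hb, hc⟩
    refine ⟨?_, ?_, ?_⟩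
    · intro z hz
      rw [Id2 z, half_smul_posSemidef_iff]
      exact ha z hz.le
    · intro z hz
      rw [hrank z]
      exact hb z hz
    · intro p z h1 h2
      exact hc p z ((hpoly p).1 h1) ((hvec z _).1 h2)
  · rintro ⟨ha, hb, hc⟩
    refine ⟨?_, ?_, ?_⟩
    · refine boundary_psd P Q (fun w hw => ?_)
      have := ha w hw
      rwa [Id2 w, half_smul_posSemidef_iff] at this
    · intro z hz
      rw [← hrank z]
      exact hb z hz
    · intro p z h1 h2
      exact hc p z ((hpoly p).2 h1) ((hvec z _).2 h2)

end
end

section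
/- Let P, Q ∈ ℝ^{n×n}[ξ] with Q nonsingular (det Q ≠ 0) and Q⁻¹P proper. Then there exists a signature matrix Σ ∈ ℝ^{n×n} (a diagonal matrix whose diagonal entries are each 1 or −1) such that Q̂ := ½(Q − PΣ) is nonsingular and Q̂⁻¹P̂ is proper, where P̂ := ½(PΣ + Q). -/
open MeasureTheory Matrix Polynomial
open scoped ComplexOrder

noncomputable section

lemma repr_cross {p q : Polynomial ℝ} (hq : q ≠ 0) {f : RatFunc ℝ}
    (hf : f = algebraMap _ _ p / algebraMap _ _ q) :
    p * f.denom = f.num * q := by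
  have h1 : (algebraMap (Polynomial ℝ) (RatFunc ℝ)) p / algebraMap _ _ q
      = algebraMap _ _ f.num / algebraMap _ _ f.denom := by
    rw [RatFunc.num_div_denom, hf]
  rw [div_eq_div_iff (RatFunc.algebraMap_ne_zero hq)
    (RatFunc.algebraMap_ne_zero f.denom_ne_zero)] at h1
  apply RatFunc.algebraMap_injective ℝ
  simpa [_root_.map_mul] using h1

lemma repr_zero {p q : Polynomial ℝ} (hq : q ≠ 0) {f : RatFunc ℝ}
    (hf : f = algebraMap _ _ p / algebraMap _ _ q) (h0 : f = 0) : p = 0 := by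
  have := repr_cross hq hf
  rw [h0] at this
  simp only [RatFunc.num_zero, zero_mul] at this
  rcases mul_eq_zero.mp this with h | h
  · exact h
  · exact absurd h (RatFunc.denom_ne_zero 0)

lemma ratProper_of_repr {p q : Polynomial ℝ} (hq : q ≠ 0) (hd : p.degree ≤ q.degree)
    {f : RatFunc ℝ} (hf : f = algebraMap _ _ p / algebraMap _ _ q) : ratProper f := by
  by_cases h0 : f = 0
  · simp [ratProper, h0]
  have hp : p ≠ 0 := by
    intro hp0
    exact h0 (by simp [hf, hp0])
  have hnum : f.num ≠ 0 := RatFunc.num_ne_zero h0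
  have hc := repr_cross hq hf
  have hdeg : p.natDegree + f.denom.natDegree = f.num.natDegree + q.natDegree := by
    have := congrArg natDegree hc
    rwa [natDegree_mul hp f.denom_ne_zero, natDegree_mul hnum hq] at this
  have hpq : p.natDegree ≤ q.natDegree := natDegree_le_natDegree hd
  have : f.num.natDegree ≤ f.denom.natDegree := by omega
  unfold ratProper
  rw [degree_eq_natDegree hnum, degree_eq_natDegree f.denom_ne_zero]
  exact_mod_cast this

lemma ratLimInf_of_repr {p q : Polynomial ℝ} (hq : q ≠ 0) (hd : p.degree ≤ q.degree)
    {f : RatFunc ℝ} (hf : f = algebraMap _ _ p / algebraMap _ _ q) :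
    ratLimInf f = p.coeff q.natDegree / q.leadingCoeff := by
  by_cases h0 : f = 0
  · have hp : p = 0 := repr_zero hq hf h0
    have hne : f.num.degree ≠ f.denom.degree := by
      rw [h0]
      simp only [RatFunc.num_zero, degree_zero]
      intro h
      exact RatFunc.denom_ne_zero (0 : RatFunc ℝ) (degree_eq_bot.mp h.symm)
    simp [ratLimInf, hne, hp]
  · have hp : p ≠ 0 := fun hp0 => h0 (by simp [hf, hp0])
    have hnum : f.num ≠ 0 := RatFunc.num_ne_zero h0
    have hden := f.denom_ne_zero
    have hc := repr_cross hq hf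
    have hpq : p.natDegree ≤ q.natDegree := natDegree_le_natDegree hd
    have hprop : f.num.degree ≤ f.denom.degree := ratProper_of_repr hq hd hf
    have hkey : p.coeff q.natDegree * f.denom.leadingCoeff
        = q.leadingCoeff * f.num.coeff f.denom.natDegree := by
      have h1 : (p * f.denom).coeff (q.natDegree + f.denom.natDegree)
          = p.coeff q.natDegree * f.denom.coeff f.denom.natDegree :=
        coeff_mul_add_eq_of_natDegree_le hpq le_rfl
      have h2 : (f.num * q).coeff (f.denom.natDegree + q.natDegree)
          = f.num.coeff f.denom.natDegree * q.coeff q.natDegree :=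
        coeff_mul_add_eq_of_natDegree_le (natDegree_le_natDegree hprop) le_rfl
      rw [Nat.add_comm] at h2
      rw [hc, h2] at h1
      rw [leadingCoeff, leadingCoeff]
      linarith [h1]
    have hlcq : q.leadingCoeff ≠ 0 := leadingCoeff_ne_zero.mpr hq
    have hlcd : f.denom.leadingCoeff ≠ 0 := leadingCoeff_ne_zero.mpr hden
    by_cases he : f.num.degree = f.denom.degree
    · have hnd : f.num.natDegree = f.denom.natDegree := natDegree_eq_of_degree_eq he
      rw [ratLimInf, if_pos he]
      have : f.num.coeff f.denom.natDegree = f.num.leadingCoeff := by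
        rw [leadingCoeff, hnd]
      rw [this] at hkey
      field_simp
      linarith [hkey]
    · have hlt : f.num.degree < f.denom.degree := lt_of_le_of_ne hprop he
      have : f.num.coeff f.denom.natDegree = 0 := by
        apply coeff_eq_zero_of_degree_lt
        rwa [degree_eq_natDegree hden] at hlt
      rw [this, mul_zero] at hkey
      have hp0 : p.coeff q.natDegree = 0 := by
        rcases mul_eq_zero.mp hkey with h | h
        · exact h
        · exact absurd h hlcd
      rw [ratLimInf, if_neg he, hp0, zero_div]


lemma const_spec (r : ℝ) : ratProper (algebraMap ℝ (RatFunc ℝ) r) ∧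
    ratLimInf (algebraMap ℝ (RatFunc ℝ) r) = r := by
  have hrep : algebraMap ℝ (RatFunc ℝ) r
      = algebraMap (Polynomial ℝ) (RatFunc ℝ) (C r) / algebraMap (Polynomial ℝ) (RatFunc ℝ) 1 := by
    rw [_root_.map_one, div_one, IsScalarTower.algebraMap_apply ℝ (Polynomial ℝ) (RatFunc ℝ)]
    rfl
  have hd : (C r).degree ≤ (1 : Polynomial ℝ).degree := by
    rw [Polynomial.degree_one]
    exact degree_C_le
  refine ⟨ratProper_of_repr one_ne_zero hd hrep, ?_⟩
  rw [ratLimInf_of_repr one_ne_zero hd hrep]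
  simp

lemma lim_canon (f : RatFunc ℝ) (hf : ratProper f) :
    ratLimInf f = f.num.coeff f.denom.natDegree / f.denom.leadingCoeff :=
  ratLimInf_of_repr f.denom_ne_zero hf (f.num_div_denom).symm

lemma add_spec {f g : RatFunc ℝ} (hf : ratProper f) (hg : ratProper g) :
    ratProper (f + g) ∧ ratLimInf (f + g) = ratLimInf f + ratLimInf g := by
  set p1 := f.num; set q1 := f.denom; set p2 := g.num; set q2 := g.denom
  have h1 : q1 ≠ 0 := f.denom_ne_zero
  have h2 : q2 ≠ 0 := g.denom_ne_zero
  have hrep : f + g = algebraMap (Polynomial ℝ) (RatFunc ℝ) (p1 * q2 + p2 * q1)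
      / algebraMap _ _ (q1 * q2) := by
    conv_lhs => rw [← f.num_div_denom, ← g.num_div_denom]
    rw [div_add_div _ _ (RatFunc.algebraMap_ne_zero h1) (RatFunc.algebraMap_ne_zero h2)]
    push_cast [_root_.map_add, _root_.map_mul]
    simp only [p1, p2, q1, q2]
    ring_nf
  have hq : q1 * q2 ≠ 0 := mul_ne_zero h1 h2
  have hd : (p1 * q2 + p2 * q1).degree ≤ (q1 * q2).degree := by
    refine le_trans (degree_add_le _ _) (max_le ?_ ?_)
    · rw [degree_mul, degree_mul]
      exact add_le_add_left hf _
    · rw [degree_mul, degree_mul, add_comm q1.degree]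
      exact add_le_add_left hg _
  refine ⟨ratProper_of_repr hq hd hrep, ?_⟩
  rw [ratLimInf_of_repr hq hd hrep, lim_canon f hf, lim_canon g hg]
  have hnd : (q1 * q2).natDegree = q1.natDegree + q2.natDegree := natDegree_mul h1 h2
  have hc1 : (p1 * q2).coeff (q1.natDegree + q2.natDegree)
      = p1.coeff q1.natDegree * q2.leadingCoeff :=
    coeff_mul_add_eq_of_natDegree_le (natDegree_le_natDegree hf) le_rfl
  have hc2 : (p2 * q1).coeff (q1.natDegree + q2.natDegree)
      = p2.coeff q2.natDegree * q1.leadingCoeff := by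
    rw [Nat.add_comm]
    exact coeff_mul_add_eq_of_natDegree_le (natDegree_le_natDegree hg) le_rfl
  rw [hnd, coeff_add, hc1, hc2, leadingCoeff_mul]
  have l1 : q1.leadingCoeff ≠ 0 := leadingCoeff_ne_zero.mpr h1
  have l2 : q2.leadingCoeff ≠ 0 := leadingCoeff_ne_zero.mpr h2
  simp only [p1, p2, q1, q2] at l1 l2 ⊢
  field_simp
  try ring

lemma mul_spec {f g : RatFunc ℝ} (hf : ratProper f) (hg : ratProper g) :
    ratProper (f * g) ∧ ratLimInf (f * g) = ratLimInf f * ratLimInf g := by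
  set p1 := f.num; set q1 := f.denom; set p2 := g.num; set q2 := g.denom
  have h1 : q1 ≠ 0 := f.denom_ne_zero
  have h2 : q2 ≠ 0 := g.denom_ne_zero
  have hrep : f * g = algebraMap (Polynomial ℝ) (RatFunc ℝ) (p1 * p2)
      / algebraMap _ _ (q1 * q2) := by
    conv_lhs => rw [← f.num_div_denom, ← g.num_div_denom]
    rw [div_mul_div_comm, ← _root_.map_mul, ← _root_.map_mul]
  have hq : q1 * q2 ≠ 0 := mul_ne_zero h1 h2
  have hd : (p1 * p2).degree ≤ (q1 * q2).degree := by
    rw [degree_mul, degree_mul]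
    exact add_le_add hf hg
  refine ⟨ratProper_of_repr hq hd hrep, ?_⟩
  rw [ratLimInf_of_repr hq hd hrep, lim_canon f hf, lim_canon g hg]
  have hnd : (q1 * q2).natDegree = q1.natDegree + q2.natDegree := natDegree_mul h1 h2
  have hc : (p1 * p2).coeff (q1.natDegree + q2.natDegree)
      = p1.coeff q1.natDegree * p2.coeff q2.natDegree :=
    coeff_mul_add_eq_of_natDegree_le (natDegree_le_natDegree hf) (natDegree_le_natDegree hg)
  rw [hnd, hc, leadingCoeff_mul]
  have l1 : q1.leadingCoeff ≠ 0 := leadingCoeff_ne_zero.mpr h1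
  have l2 : q2.leadingCoeff ≠ 0 := leadingCoeff_ne_zero.mpr h2
  simp only [p1, p2, q1, q2] at l1 l2 ⊢
  field_simp
  try ring

lemma neg_spec {f : RatFunc ℝ} (hf : ratProper f) :
    ratProper (-f) ∧ ratLimInf (-f) = -ratLimInf f := by
  have h := mul_spec (const_spec (-1)).1 hf
  rw [(const_spec (-1)).2] at h
  rw [show -f = algebraMap ℝ (RatFunc ℝ) (-1) * f by simp, h.2]
  exact ⟨h.1, by ring⟩

lemma inv_spec {f : RatFunc ℝ} (hf : ratProper f) (hl : ratLimInf f ≠ 0) :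
    f ≠ 0 ∧ ratProper f⁻¹ := by
  have h0 : f ≠ 0 := by
    rintro rfl
    apply hl
    rw [ratLimInf]
    have : (0 : RatFunc ℝ).num.degree ≠ (0 : RatFunc ℝ).denom.degree := by
      simp only [RatFunc.num_zero, degree_zero]
      exact fun h => RatFunc.denom_ne_zero 0 (degree_eq_bot.mp h.symm)
    rw [if_neg this]
  have he : f.num.degree = f.denom.degree := by
    by_contra he
    exact hl (by rw [ratLimInf, if_neg he])
  have hnum : f.num ≠ 0 := RatFunc.num_ne_zero h0
  have hrep : f⁻¹ = algebraMap (Polynomial ℝ) (RatFunc ℝ) f.denom / algebraMap _ _ f.num := by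
    conv_lhs => rw [← f.num_div_denom]
    rw [inv_div]
  exact ⟨h0, ratProper_of_repr hnum he.ge hrep⟩


def properO : Subring (RatFunc ℝ) where
  carrier := {f | ratProper f}
  mul_mem' hf hg := (mul_spec hf hg).1
  one_mem' := by simpa using (const_spec 1).1
  add_mem' hf hg := (add_spec hf hg).1
  zero_mem' := by simpa using (const_spec 0).1
  neg_mem' hf := (neg_spec hf).1

def limHom : properO →+* ℝ where
  toFun f := ratLimInf f.1
  map_one' := by simpa using (const_spec 1).2
  map_mul' a b := (mul_spec a.2 b.2).2
  map_zero' := by simpa using (const_spec 0).2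
  map_add' a b := (add_spec a.2 b.2).2

def liftO {m k : Type*} (M : Matrix m k (RatFunc ℝ)) (h : ProperM M) : Matrix m k properO :=
  Matrix.of fun i j => ⟨M i j, h i j⟩

lemma liftO_map {m k : Type*} (M : Matrix m k (RatFunc ℝ)) (h : ProperM M) :
    (liftO M h).map properO.subtype = M := rfl

lemma properM_map {m k : Type*} (K : Matrix m k properO) :
    ProperM (K.map properO.subtype) ∧ limM (K.map properO.subtype) = K.map limHom :=
  ⟨fun i j => (K i j).2, rfl⟩

lemma det_spec {k : ℕ} (M : Matrix (Fin k) (Fin k) (RatFunc ℝ)) (h : ProperM M) :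
    ratProper M.det ∧ ratLimInf M.det = (limM M).det := by
  have hM : M.det = properO.subtype ((liftO M h).det) := by
    rw [RingHom.map_det, RingHom.mapMatrix_apply, liftO_map]
  constructor
  · rw [hM]; exact ((liftO M h).det).2
  · have : ratLimInf M.det = limHom ((liftO M h).det) := by rw [hM]; rfl
    rw [this, RingHom.map_det, RingHom.mapMatrix_apply, ← (properM_map (liftO M h)).2, liftO_map]

lemma ratLimInf_zero : ratLimInf 0 = 0 := by simpa using (const_spec 0).2

lemma inv_properM {k : ℕ} (M : Matrix (Fin k) (Fin k) (RatFunc ℝ)) (h : ProperM M)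
    (hl : (limM M).det ≠ 0) : M.det ≠ 0 ∧ ProperM M⁻¹ := by
  have hdp := det_spec M h
  have hd0 : M.det ≠ 0 := by
    intro h0
    rw [h0, ratLimInf_zero] at hdp
    exact hl hdp.2.symm
  have hadj : ProperM M.adjugate := by
    have h2 := RingHom.map_adjugate properO.subtype (liftO M h)
    rw [RingHom.mapMatrix_apply, RingHom.mapMatrix_apply, liftO_map] at h2
    rw [← h2]
    exact (properM_map _).1
  refine ⟨hd0, fun i j => ?_⟩
  have hinv : M⁻¹ i j = M.det⁻¹ * M.adjugate i j := by
    rw [Matrix.inv_def, Ring.inverse_eq_inv']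
    rfl
  rw [hinv]
  have hlim : ratLimInf M.det ≠ 0 := hdp.2 ▸ hl
  exact (mul_spec (inv_spec hdp.1 hlim).2 (hadj i j)).1

lemma affine_step {k : ℕ} (D : Matrix (Fin k) (Fin k) ℝ) (t : Fin k → ℝ) (i : Fin k)
    (hti : t i = 0) :
    (1 - D * Matrix.diagonal (Function.update t i 1)).det
      + (1 - D * Matrix.diagonal (Function.update t i (-1))).det
      = 2 * (1 - D * Matrix.diagonal t).det := by
  set B := 1 - D * Matrix.diagonal t with hB
  have hcol : ∀ s : ℝ, 1 - D * Matrix.diagonal (Function.update t i s)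
      = B.updateCol i ((fun r => B r i) + s • fun r => -(D r i)) := by
    intro s
    ext r j
    by_cases hj : j = i
    · subst hj
      simp [Matrix.updateCol_apply, hB, Matrix.sub_apply, Matrix.mul_diagonal,
        Matrix.one_apply, hti]
      try ring
    · simp [Matrix.updateCol_apply, hj, hB, Matrix.sub_apply, Matrix.mul_diagonal,
        Function.update_of_ne hj]
  have hdet : ∀ s : ℝ, (1 - D * Matrix.diagonal (Function.update t i s)).det
      = B.det + s * (B.updateCol i fun r => -(D r i)).det := by
    intro s
    rw [hcol s, Matrix.det_updateCol_add, Matrix.det_updateCol_smul,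
      Matrix.updateCol_eq_self]
  rw [hdet 1, hdet (-1)]
  ring

lemma sign_exists {k : ℕ} (D : Matrix (Fin k) (Fin k) ℝ) :
    ∃ ε : Fin k → ℝ, (∀ i, ε i = 1 ∨ ε i = -1) ∧ (1 - D * Matrix.diagonal ε).det ≠ 0 := by
  suffices h : ∀ m (t : Fin k → ℝ), (∀ i, t i = 1 ∨ t i = -1 ∨ t i = 0) →
      (1 - D * Matrix.diagonal t).det ≠ 0 →
      (Finset.univ.filter fun i => t i = 0).card ≤ m →
      ∃ ε : Fin k → ℝ, (∀ i, ε i = 1 ∨ ε i = -1) ∧ (1 - D * Matrix.diagonal ε).det ≠ 0 by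
    refine h k (fun _ => 0) (fun i => Or.inr (Or.inr rfl)) ?_ ?_
    · simp [Matrix.diagonal_zero]
    · simpa using (Finset.card_filter_le _ _)
  intro m
  induction m with
  | zero =>
    intro t ht hdet hcard
    refine ⟨t, fun i => ?_, hdet⟩
    rcases ht i with h1 | h1 | h1
    · exact Or.inl h1
    · exact Or.inr h1
    · exfalso
      have : i ∈ Finset.univ.filter fun j => t j = 0 := by simp [h1]
      rw [Finset.card_eq_zero.mp (Nat.le_zero.mp hcard)] at this
      exact absurd this (Finset.notMem_empty i)
  | succ m ih =>
    intro t ht hdet hcard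
    by_cases hz : ∃ i, t i = 0
    · obtain ⟨i, hi⟩ := hz
      have key := affine_step D t i hi
      have hone : (1 - D * Matrix.diagonal (Function.update t i 1)).det ≠ 0 ∨
          (1 - D * Matrix.diagonal (Function.update t i (-1))).det ≠ 0 := by
        by_contra hc
        push_neg at hc
        rw [hc.1, hc.2] at key
        exact hdet (by linarith)
      have hcard' : ∀ s : ℝ, s ≠ 0 →
          (Finset.univ.filter fun j => Function.update t i s j = 0).card ≤ m := by
        intro s hs
        have hsub : (Finset.univ.filter fun j => Function.update t i s j = 0)
            ⊆ (Finset.univ.filter fun j => t j = 0).erase i := by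
          intro j hj
          simp only [Finset.mem_filter, Finset.mem_univ, true_and] at hj
          have hji : j ≠ i := by
            intro hji
            rw [hji, Function.update_self] at hj
            exact hs hj
          rw [Function.update_of_ne hji] at hj
          exact Finset.mem_erase.mpr ⟨hji, by simp [hj]⟩
        have h1 := Finset.card_le_card hsub
        have h2 : i ∈ Finset.univ.filter fun j => t j = 0 := by simp [hi]
        rw [Finset.card_erase_of_mem h2] at h1
        have h3 : 1 ≤ (Finset.univ.filter fun j => t j = 0).card :=
          Finset.card_pos.mpr ⟨i, h2⟩
        omega
      have hupd : ∀ s : ℝ, (s = 1 ∨ s = -1) → ∀ j,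
          Function.update t i s j = 1 ∨ Function.update t i s j = -1 ∨
            Function.update t i s j = 0 := by
        intro s hs j
        by_cases hji : j = i
        · subst hji
          rw [Function.update_self]
          rcases hs with h | h
          · exact Or.inl h
          · exact Or.inr (Or.inl h)
        · rw [Function.update_of_ne hji]
          exact ht j
      rcases hone with h | h
      · exact ih (Function.update t i 1) (hupd 1 (Or.inl rfl)) h (hcard' 1 one_ne_zero)
      · exact ih (Function.update t i (-1)) (hupd (-1) (Or.inr rfl)) h
          (hcard' (-1) (by norm_num))
    · push_neg at hz
      refine ih t ht hdet ?_
      have : (Finset.univ.filter fun j => t j = 0) = ∅ := by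
        apply Finset.filter_false_of_mem
        intro j _
        exact hz j
      simp [this]

lemma properM_mul {a b c : Type*} [Fintype b] (M : Matrix a b (RatFunc ℝ))
    (N : Matrix b c (RatFunc ℝ)) (hM : ProperM M) (hN : ProperM N) : ProperM (M * N) := by
  have : M * N = (liftO M hM * liftO N hN).map properO.subtype := by
    rw [Matrix.map_mul, liftO_map, liftO_map]
  rw [this]
  exact (properM_map _).1


lemma matmap_sub {k : Type*} {R S : Type*} [CommRing R] [CommRing S] (f : R →+* S)
    (K K' : Matrix k k R) : (K - K').map f = K.map f - K'.map f :=
  Matrix.map_sub f (fun a b => map_sub f a b) K K'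

lemma matmap_add {k : Type*} {R S : Type*} [CommRing R] [CommRing S] (f : R →+* S)
    (K K' : Matrix k k R) : (K + K').map f = K.map f + K'.map f :=
  Matrix.map_add f (fun a b => map_add f a b) K K'

lemma matmap_one {k : Type*} [Fintype k] [DecidableEq k] {R S : Type*} [CommRing R] [CommRing S]
    (f : R →+* S) : (1 : Matrix k k R).map f = 1 :=
  Matrix.map_one f (map_zero f) (map_one f)

set_option maxHeartbeats 2000000 in
set_option synthInstance.maxHeartbeats 400000 in

theorem statement16 {n : ℕ} (P Q : Matrix (Fin n) (Fin n) (Polynomial ℝ))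
    (hQ : Q.det ≠ 0) (hprop : ProperM ((ratM Q)⁻¹ * ratM P)) :
    ∃ Sg : Matrix (Fin n) (Fin n) ℝ, IsSignature Sg ∧
      ((1 / 2 : ℝ) • (Q - P * Sg.map Polynomial.C)).det ≠ 0 ∧
      ProperM ((ratM ((1 / 2 : ℝ) • (Q - P * Sg.map Polynomial.C)))⁻¹ *
        ratM ((1 / 2 : ℝ) • (P * Sg.map Polynomial.C + Q))) := by
  set A := algebraMap (Polynomial ℝ) (RatFunc ℝ) with hA
  set Qr := ratM Q with hQrdef
  set Pr := ratM P with hPrdef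
  set G := Qr⁻¹ * Pr with hGdef
  obtain ⟨ε, hε, hdet⟩ := sign_exists (limM G)
  set Sg := Matrix.diagonal ε with hSgdef
  have hsig : IsSignature Sg := ⟨fun i j hij => Matrix.diagonal_apply_ne ε hij,
    fun i => by rw [hSgdef, Matrix.diagonal_apply_eq]; exact hε i⟩
  set Sr := ratM (Sg.map Polynomial.C) with hSrdef
  have hSrE : ∀ i j, Sr i j = algebraMap ℝ (RatFunc ℝ) (Sg i j) := by
    intro i j
    rw [hSrdef, ratM, Matrix.map_apply, Matrix.map_apply,
      IsScalarTower.algebraMap_apply ℝ (Polynomial ℝ) (RatFunc ℝ)]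
    rfl
  have hSrP : ProperM Sr := fun i j => by rw [hSrE]; exact (const_spec _).1
  -- determinant of Qr nonzero
  have hQr : Qr.det ≠ 0 := by
    intro h
    rw [hQrdef, ratM, ← RingHom.mapMatrix_apply, ← RingHom.map_det] at h
    exact RatFunc.algebraMap_ne_zero hQ h
  have hQrU : IsUnit Qr.det := isUnit_iff_ne_zero.mpr hQr
  have hPG : Pr = Qr * G := by
    rw [hGdef, ← mul_assoc, Matrix.mul_nonsing_inv Qr hQrU, one_mul]
  set X := G * Sr with hXdef
  -- properness and limit of 1 - X and 1 + X
  set KG := liftO G hprop with hKG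
  set KS := liftO Sr hSrP with hKS
  have hKGl : KG.map limHom = limM G := ((properM_map KG).2).symm
  have hKSl : KS.map limHom = Sg := by
    rw [← (properM_map KS).2, liftO_map]
    ext i j
    show ratLimInf (Sr i j) = Sg i j
    rw [hSrE]
    exact (const_spec _).2
  have e1 : 1 - X = ((1 : Matrix (Fin n) (Fin n) properO) - KG * KS).map properO.subtype := by
    rw [matmap_sub, matmap_one, Matrix.map_mul, liftO_map, liftO_map]
  have e2 : 1 + X = ((1 : Matrix (Fin n) (Fin n) properO) + KG * KS).map properO.subtype := by
    rw [matmap_add, matmap_one, Matrix.map_mul, liftO_map, liftO_map]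
  have hP1X : ProperM (1 - X) := by rw [e1]; exact (properM_map _).1
  have hP2X : ProperM (1 + X) := by rw [e2]; exact (properM_map _).1
  have hlim1X : limM (1 - X) = 1 - limM G * Sg := by
    rw [e1, (properM_map _).2, matmap_sub, matmap_one, Matrix.map_mul, hKGl, hKSl]
  have hdet1X : (limM (1 - X)).det ≠ 0 := by rw [hlim1X, hSgdef]; exact hdet
  obtain ⟨hXd, hXinv⟩ := inv_properM (1 - X) hP1X hdet1X
  set N := (1 - X)⁻¹ * (1 + X) with hNdef
  have hNP : ProperM N := properM_mul _ _ hXinv hP2X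
  -- ratM of the scaled matrices
  have hsmul : ∀ M : Matrix (Fin n) (Fin n) (Polynomial ℝ),
      ratM ((1 / 2 : ℝ) • M) = (1 / 2 : ℝ) • ratM M := by
    intro M
    ext i j
    show A ((1 / 2 : ℝ) • M i j) = (1 / 2 : ℝ) • A (M i j)
    rw [hA, ← IsScalarTower.coe_toAlgHom' ℝ (Polynomial ℝ) (RatFunc ℝ), _root_.map_smul]
  have hsub : ratM (Q - P * Sg.map Polynomial.C) = Qr - Pr * Sr := by
    show (Q - P * Sg.map Polynomial.C).map A = _
    rw [matmap_sub, Matrix.map_mul]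
    rfl
  have hadd : ratM (P * Sg.map Polynomial.C + Q) = Pr * Sr + Qr := by
    show (P * Sg.map Polynomial.C + Q).map A = _
    rw [matmap_add, Matrix.map_mul]
    rfl
  have hQhat : ratM ((1 / 2 : ℝ) • (Q - P * Sg.map Polynomial.C))
      = (1 / 2 : ℝ) • (Qr * (1 - X)) := by
    rw [hsmul, hsub, hPG, Matrix.mul_sub, Matrix.mul_one, hXdef, mul_assoc]
  have hPhat : ratM ((1 / 2 : ℝ) • (P * Sg.map Polynomial.C + Q))
      = (1 / 2 : ℝ) • (Qr * (1 + X)) := by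
    rw [hsmul, hadd, hPG, Matrix.mul_add, Matrix.mul_one, hXdef, mul_assoc, add_comm]
  -- the scalar c = algebraMap (1/2) is nonzero
  have hc0 : algebraMap ℝ (RatFunc ℝ) (1 / 2 : ℝ) ≠ 0 := by
    intro h
    have h2 := (const_spec (1 / 2 : ℝ)).2
    rw [h, ratLimInf_zero] at h2
    norm_num at h2
  have hsmul' : ∀ M : Matrix (Fin n) (Fin n) (RatFunc ℝ),
      (1 / 2 : ℝ) • M = algebraMap ℝ (RatFunc ℝ) (1 / 2 : ℝ) • M := by
    intro M
    rw [algebraMap_smul]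
  have hdQhat : (ratM ((1 / 2 : ℝ) • (Q - P * Sg.map Polynomial.C))).det ≠ 0 := by
    rw [hQhat, hsmul', Matrix.det_smul, Matrix.det_mul]
    exact mul_ne_zero (pow_ne_zero _ hc0) (mul_ne_zero hQr hXd)
  have hQhatU : IsUnit (ratM ((1 / 2 : ℝ) • (Q - P * Sg.map Polynomial.C))).det :=
    isUnit_iff_ne_zero.mpr hdQhat
  refine ⟨Sg, hsig, ?_, ?_⟩
  · intro h
    apply hdQhat
    show (((1 / 2 : ℝ) • (Q - P * Sg.map Polynomial.C)).map A).det = 0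
    rw [← RingHom.mapMatrix_apply, ← RingHom.map_det, h, map_zero]
  · have hmul : ratM ((1 / 2 : ℝ) • (Q - P * Sg.map Polynomial.C)) * N
        = ratM ((1 / 2 : ℝ) • (P * Sg.map Polynomial.C + Q)) := by
      rw [hQhat, hPhat, Matrix.smul_mul, mul_assoc, hNdef, ← mul_assoc (1 - X),
        Matrix.mul_nonsing_inv _ (isUnit_iff_ne_zero.mpr hXd), one_mul]
    rw [← hmul, ← mul_assoc, Matrix.nonsing_inv_mul _ hQhatU, one_mul]
    exact hNP


end
end

section
/- Suppose m = n. Let X ∈ ℝ^{d×d} be symmetric with X ⪰ 0 and Ω(X) ⪰ 0, and suppose z ∈ ℂ^d and λ ∈ ℂ with Re λ ≤ 0 satisfy zᵀ(λI − A) = 0 and zᵀB = 0. Let X̂ := z·z̄ᵀ + z̄·zᵀ, where z̄ denotes the entrywise complex conjugate (so X̂ is a real symmetric positive-semidefinite matrix). Then for every α > 0, X + αX̂ ⪰ 0 and Ω(X + αX̂) = Ω(X) − α(λ + conj λ)·diag(X̂, 0) ⪰ 0. In particular, if z ≠ 0, then the set of symmetric matrices X ∈ ℝ^{d×d} with X ⪰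 0 and Ω(X) ⪰ 0 has no upper bound: there is no symmetric X₊ with X ≤ X₊ for all such X. -/
open MeasureTheory Matrix Polynomial
open scoped ComplexOrder

noncomputable section

/-- the LMI matrix of the positive-real lemma -/
def Omega {d n : ℕ} (A : Mat d d) (B : Mat d n) (C : Mat n d) (D : Mat n n)
    (X : Mat d d) : Matrix (Fin d ⊕ Fin n) (Fin d ⊕ Fin n) ℝ :=
  Matrix.fromBlocks (-(Aᵀ * X) - X * A) (Cᵀ - X * B) (C - Bᵀ * X) (D + Dᵀ)

/-- the real symmetric matrix `z z̄ᵀ + z̄ zᵀ` associated with `z ∈ ℂ^d` -/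
def outerSym {d : ℕ} (z : Fin d → ℂ) : Mat d d :=
  Matrix.of fun i j => (z i * (starRingEnd ℂ) (z j) + (starRingEnd ℂ) (z i) * z j).re

-- quadratic form of outerSym
lemma outerSym_quad {d : ℕ} (z : Fin d → ℂ) (x : Fin d → ℝ) :
    x ⬝ᵥ (outerSym z) *ᵥ x = 2 * Complex.normSq (∑ i, (x i : ℂ) * z i) := by
  have key : ∀ i j, x i * ((z i * (starRingEnd ℂ) (z j) + (starRingEnd ℂ) (z i) * z j).re * x j)
      = (((x i : ℂ) * z i) * ((starRingEnd ℂ) ((x j : ℂ) * z j))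
        + ((starRingEnd ℂ) ((x i : ℂ) * z i)) * ((x j : ℂ) * z j)).re := by
    intro i j
    simp only [_root_.map_mul, Complex.conj_ofReal]
    rw [show ((x i : ℂ) * z i) * ((x j : ℂ) * (starRingEnd ℂ) (z j))
        + ((x i : ℂ) * (starRingEnd ℂ) (z i)) * ((x j : ℂ) * z j)
        = ((x i : ℝ) * x j : ℝ) * (z i * (starRingEnd ℂ) (z j) + (starRingEnd ℂ) (z i) * z j)
      by push_cast; ring]
    rw [Complex.re_ofReal_mul]; ring
  simp only [dotProduct, Matrix.mulVec, outerSym, Matrix.of_apply, dotProduct, Finset.mul_sum]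
  rw [show ∀ s : ℂ, 2 * Complex.normSq s = (s * (starRingEnd ℂ) s + (starRingEnd ℂ) s * s).re by
    intro s; rw [Complex.mul_conj]; simp [Complex.normSq]; ring]
  simp only [key]
  simp only [← Complex.re_sum]
  congr 1
  rw [map_sum, Finset.sum_mul_sum, Finset.sum_mul_sum, ← Finset.sum_add_distrib]
  exact Finset.sum_congr rfl fun i _ => by rw [← Finset.sum_add_distrib]

lemma outerSym_herm {d : ℕ} (z : Fin d → ℂ) : (outerSym z).IsHermitian := by
  ext i j
  simp only [outerSym, Matrix.conjTranspose_apply, Matrix.of_apply, star_trivial]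
  rw [show z j * (starRingEnd ℂ) (z i) + (starRingEnd ℂ) (z j) * z i
      = z i * (starRingEnd ℂ) (z j) + (starRingEnd ℂ) (z i) * z j from by ring]

lemma outerSym_psd {d : ℕ} (z : Fin d → ℂ) : (outerSym z).PosSemidef := by
  refine Matrix.PosSemidef.of_dotProduct_mulVec_nonneg (outerSym_herm z) fun x => ?_
  rw [star_trivial, outerSym_quad]
  have := Complex.normSq_nonneg (∑ i, (x i : ℂ) * z i)
  linarith

lemma psd_smul {m : Type*} [Fintype m] {M : Matrix m m ℝ} (hM : M.PosSemidef) {c : ℝ} (hc : 0 ≤ c) :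
    (c • M).PosSemidef := by
  refine Matrix.PosSemidef.of_dotProduct_mulVec_nonneg ?_ fun x => ?_
  · unfold Matrix.IsHermitian
    rw [Matrix.conjTranspose_smul, hM.1, star_trivial]
  · rw [Matrix.smul_mulVec, dotProduct_smul, smul_eq_mul]
    exact mul_nonneg hc (hM.dotProduct_mulVec_nonneg x)

lemma psd_fromBlocks {d n : ℕ} {M : Matrix (Fin d) (Fin d) ℝ} (hM : M.PosSemidef) :
    (Matrix.fromBlocks M 0 0 (0 : Mat n n)).PosSemidef := by
  refine Matrix.PosSemidef.of_dotProduct_mulVec_nonneg ?_ ?_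
  · unfold Matrix.IsHermitian
    rw [Matrix.fromBlocks_conjTranspose, hM.1]
    simp
  · intro x
    have hx : x = Sum.elim (x ∘ Sum.inl) (x ∘ Sum.inr) := by
      ext (i | j) <;> rfl
    rw [star_trivial, hx, Matrix.fromBlocks_mulVec, sumElim_dotProduct_sumElim]
    simp only [Matrix.zero_mulVec, add_zero, dotProduct_zero]
    have := hM.dotProduct_mulVec_nonneg (x ∘ Sum.inl)
    rw [star_trivial] at this
    simpa using this

lemma outerSym_isSymm {d : ℕ} (z : Fin d → ℂ) : (outerSym z).IsSymm := by
  ext i j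
  simp only [Matrix.transpose_apply, outerSym, Matrix.of_apply]
  rw [show z j * (starRingEnd ℂ) (z i) + (starRingEnd ℂ) (z j) * z i
      = z i * (starRingEnd ℂ) (z j) + (starRingEnd ℂ) (z i) * z j from by ring]

lemma outerSym_mul_right {d n : ℕ} (z : Fin d → ℂ) (B : Mat d n)
    (hB : ∀ j, ∑ k, z k * (B k j : ℂ) = 0) : outerSym z * B = 0 := by
  have hBc : ∀ j, ∑ k, (starRingEnd ℂ) (z k) * (B k j : ℂ) = 0 := by
    intro j
    have h := congrArg (starRingEnd ℂ) (hB j)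
    simpa only [map_sum, _root_.map_mul, Complex.conj_ofReal, map_zero] using h
  ext i j
  rw [Matrix.mul_apply, Matrix.zero_apply]
  have e1 : ∀ k, outerSym z i k * B k j
      = (((B k j : ℝ) : ℂ) * (z i * (starRingEnd ℂ) (z k) + (starRingEnd ℂ) (z i) * z k)).re := by
    intro k
    rw [Complex.re_ofReal_mul, outerSym, Matrix.of_apply]
    ring
  simp only [e1]
  rw [← Complex.re_sum]
  have : ∑ k, ((B k j : ℝ) : ℂ) * (z i * (starRingEnd ℂ) (z k) + (starRingEnd ℂ) (z i) * z k)
      = z i * (∑ k, (starRingEnd ℂ) (z k) * (B k j : ℂ))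
        + (starRingEnd ℂ) (z i) * (∑ k, z k * (B k j : ℂ)) := by
    rw [Finset.mul_sum, Finset.mul_sum, ← Finset.sum_add_distrib]
    exact Finset.sum_congr rfl fun k _ => by ring
  rw [this, hB j, hBc j]
  simp

lemma outerSym_lyap {d : ℕ} (z : Fin d → ℂ) (A : Mat d d) (lam : ℂ)
    (hA : ∀ j, ∑ k, z k * (A k j : ℂ) = lam * z j) :
    Aᵀ * outerSym z + outerSym z * A = (2 * lam.re) • outerSym z := by
  have hAc : ∀ j, ∑ k, (starRingEnd ℂ) (z k) * (A k j : ℂ)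
      = (starRingEnd ℂ) lam * (starRingEnd ℂ) (z j) := by
    intro j
    have h := congrArg (starRingEnd ℂ) (hA j)
    simpa only [map_sum, _root_.map_mul, Complex.conj_ofReal] using h
  ext i j
  rw [Matrix.add_apply, Matrix.mul_apply, Matrix.mul_apply, Matrix.smul_apply, smul_eq_mul]
  have e1 : ∀ k, Aᵀ i k * outerSym z k j
      = (((A k i : ℝ) : ℂ) * (z k * (starRingEnd ℂ) (z j) + (starRingEnd ℂ) (z k) * z j)).re := by
    intro k
    rw [Complex.re_ofReal_mul, Matrix.transpose_apply, outerSym, Matrix.of_apply]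
  have e2 : ∀ k, outerSym z i k * A k j
      = (((A k j : ℝ) : ℂ) * (z i * (starRingEnd ℂ) (z k) + (starRingEnd ℂ) (z i) * z k)).re := by
    intro k
    rw [Complex.re_ofReal_mul, outerSym, Matrix.of_apply]
    ring
  simp only [e1, e2]
  rw [← Complex.re_sum, ← Complex.re_sum, ← Complex.add_re]
  have s1 : ∑ k, ((A k i : ℝ) : ℂ) * (z k * (starRingEnd ℂ) (z j) + (starRingEnd ℂ) (z k) * z j)
      = (∑ k, z k * (A k i : ℂ)) * (starRingEnd ℂ) (z j)
        + (∑ k, (starRingEnd ℂ) (z k) * (A k i : ℂ)) * z j := by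
    rw [Finset.sum_mul, Finset.sum_mul, ← Finset.sum_add_distrib]
    exact Finset.sum_congr rfl fun k _ => by ring
  have s2 : ∑ k, ((A k j : ℝ) : ℂ) * (z i * (starRingEnd ℂ) (z k) + (starRingEnd ℂ) (z i) * z k)
      = z i * (∑ k, (starRingEnd ℂ) (z k) * (A k j : ℂ))
        + (starRingEnd ℂ) (z i) * (∑ k, z k * (A k j : ℂ)) := by
    rw [Finset.mul_sum, Finset.mul_sum, ← Finset.sum_add_distrib]
    exact Finset.sum_congr rfl fun k _ => by ring
  rw [s1, s2, hA i, hAc i, hA j, hAc j]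
  have : lam * z i * (starRingEnd ℂ) (z j) + (starRingEnd ℂ) lam * (starRingEnd ℂ) (z i) * z j
      + (z i * ((starRingEnd ℂ) lam * (starRingEnd ℂ) (z j)) + (starRingEnd ℂ) (z i) * (lam * z j))
      = (lam + (starRingEnd ℂ) lam) * (z i * (starRingEnd ℂ) (z j) + (starRingEnd ℂ) (z i) * z j) := by
    ring
  rw [this, Complex.add_conj, Complex.re_ofReal_mul, outerSym, Matrix.of_apply]

lemma fromBlocks_sub' {d n : ℕ} (A A' : Mat d d) (B B' : Mat d n) (C C' : Mat n d) (D D' : Mat n n) :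
    Matrix.fromBlocks A B C D - Matrix.fromBlocks A' B' C' D'
      = Matrix.fromBlocks (A - A') (B - B') (C - C') (D - D') := by
  ext (i | i) (j | j) <;> simp [Matrix.fromBlocks]

/-- unboundedness of the solution set of the LMI. -/
theorem statement18 {d n : ℕ} (A : Mat d d) (B : Mat d n) (C : Mat n d) (D : Mat n n)
    (X : Mat d d) (hsym : X.IsSymm) (hX : X.PosSemidef) (hΩ : (Omega A B C D X).PosSemidef)
    (z : Fin d → ℂ) (lam : ℂ) (hlam : lam.re ≤ 0)
    (h1 : Matrix.vecMul z (lam • (1 : Matrix (Fin d) (Fin d) ℂ) - A.map (algebraMap ℝ ℂ)) = 0)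
    (h2 : Matrix.vecMul z (B.map (algebraMap ℝ ℂ)) = 0) :
    (outerSym z).PosSemidef ∧
    (∀ α : ℝ, 0 < α →
      (X + α • outerSym z).PosSemidef ∧
      Omega A B C D (X + α • outerSym z) =
        Omega A B C D X -
          (α * (lam + (starRingEnd ℂ) lam).re) •
            Matrix.fromBlocks (outerSym z) 0 0 (0 : Mat n n) ∧
      (Omega A B C D (X + α • outerSym z)).PosSemidef) ∧
    (z ≠ 0 →
      ¬ ∃ Xp : Mat d d, Xp.IsSymm ∧
        ∀ X' : Mat d d, X'.IsSymm → X'.PosSemidef → (Omega A B C D X').PosSemidef →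
          (Xp - X').PosSemidef) := by
  have hA' : ∀ j, ∑ k, z k * ((A k j : ℝ) : ℂ) = lam * z j := by
    intro j
    have h := congrFun h1 j
    simp only [Matrix.vecMul, dotProduct, Matrix.sub_apply, Matrix.smul_apply,
      Matrix.one_apply, Matrix.map_apply, Pi.zero_apply, mul_sub, Finset.sum_sub_distrib,
      smul_eq_mul, mul_ite, mul_one, mul_zero, Finset.sum_ite_eq', Finset.mem_univ, if_true,
      sub_eq_zero] at h
    simp only [Complex.coe_algebraMap] at h
    rw [← h]
    ring
  have hB' : ∀ j, ∑ k, z k * ((B k j : ℝ) : ℂ) = 0 := by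
    intro j
    have h := congrFun h2 j
    simpa [Matrix.vecMul, dotProduct, Matrix.map_apply] using h
  have hlyap := outerSym_lyap z A lam hA'
  have hZB : outerSym z * B = 0 := outerSym_mul_right z B hB'
  have hBZ : Bᵀ * outerSym z = 0 := by
    have h := congrArg Matrix.transpose hZB
    rwa [Matrix.transpose_mul, outerSym_isSymm z, Matrix.transpose_zero] at h
  have h2re : (lam + (starRingEnd ℂ) lam).re = 2 * lam.re := by
    simp [Complex.add_re, Complex.conj_re]; ring
  have hXhat := outerSym_psd z
  have omegaEq : ∀ α : ℝ, Omega A B C D (X + α • outerSym z) =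
      Omega A B C D X -
        (α * (lam + (starRingEnd ℂ) lam).re) •
          Matrix.fromBlocks (outerSym z) 0 0 (0 : Mat n n) := by
    intro α
    unfold Omega
    rw [Matrix.fromBlocks_smul, smul_zero, smul_zero, smul_zero, fromBlocks_sub',
      sub_zero, sub_zero, sub_zero]
    have hTL : -(Aᵀ * (X + α • outerSym z)) - (X + α • outerSym z) * A
        = -(Aᵀ * X) - X * A - (α * (lam + (starRingEnd ℂ) lam).re) • outerSym z := by
      rw [Matrix.mul_add, Matrix.add_mul, Matrix.mul_smul, Matrix.smul_mul, h2re]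
      have key : α • (Aᵀ * outerSym z) + α • (outerSym z * A)
          = (α * (2 * lam.re)) • outerSym z := by
        rw [← smul_add, hlyap, smul_smul]
      rw [← key]
      abel
    have hTR : Cᵀ - (X + α • outerSym z) * B = Cᵀ - X * B := by
      rw [Matrix.add_mul, Matrix.smul_mul, hZB, smul_zero, add_zero]
    have hBL : C - Bᵀ * (X + α • outerSym z) = C - Bᵀ * X := by
      rw [Matrix.mul_add, Matrix.mul_smul, hBZ, smul_zero, add_zero]
    rw [hTL, hTR, hBL]
  have main : ∀ α : ℝ, 0 < α →
      (X + α • outerSym z).PosSemidef ∧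
      Omega A B C D (X + α • outerSym z) =
        Omega A B C D X -
          (α * (lam + (starRingEnd ℂ) lam).re) •
            Matrix.fromBlocks (outerSym z) 0 0 (0 : Mat n n) ∧
      (Omega A B C D (X + α • outerSym z)).PosSemidef := by
    intro α hα
    refine ⟨hX.add (psd_smul hXhat hα.le), omegaEq α, ?_⟩
    rw [omegaEq α, sub_eq_add_neg, ← neg_smul]
    refine hΩ.add (psd_smul (psd_fromBlocks hXhat) ?_)
    rw [h2re]
    nlinarith
  refine ⟨hXhat, main, ?_⟩
  rintro hz ⟨Xp, hXpsym, hbound⟩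
  obtain ⟨i, hi⟩ : ∃ i, z i ≠ 0 := by
    by_contra h
    push_neg at h
    exact hz (funext h)
  set v : Fin d → ℝ := Pi.single i 1 with hv
  have hq : v ⬝ᵥ (outerSym z) *ᵥ v = 2 * Complex.normSq (z i) := by
    rw [outerSym_quad]
    congr 2
    have e : ∀ x : Fin d, ((v x : ℝ) : ℂ) * z x = if x = i then z x else 0 := by
      intro x
      rw [hv, Pi.single_apply]
      split <;> simp
    simp only [e]
    simp
  have hqpos : 0 < 2 * Complex.normSq (z i) :=
    mul_pos two_pos (Complex.normSq_pos.mpr hi)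
  have key : ∀ α : ℝ, 0 < α →
      0 ≤ v ⬝ᵥ (Xp - X) *ᵥ v - α * (2 * Complex.normSq (z i)) := by
    intro α hα
    have hsymm' : (X + α • outerSym z).IsSymm := hsym.add ((outerSym_isSymm z).smul α)
    have h := (hbound _ hsymm' (main α hα).1 (main α hα).2.2).dotProduct_mulVec_nonneg v
    rw [star_trivial] at h
    have expand : v ⬝ᵥ (Xp - (X + α • outerSym z)) *ᵥ v
        = v ⬝ᵥ (Xp - X) *ᵥ v - α * (v ⬝ᵥ (outerSym z) *ᵥ v) := by
      rw [Matrix.sub_mulVec, Matrix.sub_mulVec, Matrix.add_mulVec, Matrix.smul_mulVec,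
        dotProduct_sub, dotProduct_sub, dotProduct_add,
        dotProduct_smul, smul_eq_mul]
      ring
    rw [expand, hq] at h
    exact h
  have hc0 : 0 ≤ v ⬝ᵥ (Xp - X) *ᵥ v := by
    have h := (hbound X hsym hX hΩ).dotProduct_mulVec_nonneg v
    rwa [star_trivial] at h
  set c0 := v ⬝ᵥ (Xp - X) *ᵥ v with hc0def
  have hαpos : 0 < (c0 + 1) / (2 * Complex.normSq (z i)) := div_pos (by linarith) hqpos
  have h := key _ hαpos
  rw [div_mul_cancel₀ _ hqpos.ne'] at h
  linarith

end
end

section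
/- Let A ∈ ℝ^{d×d} and C ∈ ℝ^{m×d}, and let X ∈ ℝ^{d×d} be symmetric with X ⪰ 0 and −AᵀX − XA − CᵀC ⪰ 0. Then: (i) for every λ ∈ ℂ with Re λ ≥ 0 and every z ∈ ℂ^d with Az = λz, one has Cz = 0; and (ii) if, in addition, the observability matrix V_o := col(C, CA, …, CA^{d−1}) has rank d, then every eigenvalue of A has real part < 0. -/
open MeasureTheory Matrix Polynomial
open scoped ComplexOrder

noncomputable section

section StmtHelpers


lemma psd_map {d : ℕ} {M : Matrix (Fin d) (Fin d) ℝ} (hM : M.PosSemidef) :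
    (M.map (algebraMap ℝ ℂ)).PosSemidef := by
  obtain ⟨B, hB⟩ : ∃ B : Matrix (Fin d) (Fin d) ℝ, M = Bᵀ * B := by
    open scoped MatrixOrder in
    obtain ⟨B, hB⟩ := CStarAlgebra.nonneg_iff_eq_star_mul_self.mp hM.nonneg
    exact ⟨B, by rw [hB, star_eq_conjTranspose, conjTranspose_eq_transpose_of_trivial]⟩
  have : M.map (algebraMap ℝ ℂ) = (B.map (algebraMap ℝ ℂ))ᴴ * (B.map (algebraMap ℝ ℂ)) := by
    subst hB
    ext i j
    simp [Matrix.mul_apply, Matrix.conjTranspose_apply, Complex.conj_ofReal]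
  rw [this]
  exact Matrix.posSemidef_conjTranspose_mul_self _

lemma map_mulVec_star {d m : ℕ} (M : Matrix (Fin m) (Fin d) ℝ) (z : Fin d → ℂ) :
    M.map (algebraMap ℝ ℂ) *ᵥ star z = star (M.map (algebraMap ℝ ℂ) *ᵥ z) := by
  ext i
  simp [Matrix.mulVec, dotProduct, map_sum, Complex.conj_ofReal]

lemma part1 {d m : ℕ} (A : Matrix (Fin d) (Fin d) ℝ) (C : Matrix (Fin m) (Fin d) ℝ)
    (X : Matrix (Fin d) (Fin d) ℝ) (hX : X.PosSemidef)
    (hlyap : (-(Aᵀ * X) - X * A - Cᵀ * C).PosSemidef)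
    (lam : ℂ) (hre : 0 ≤ lam.re) (z : Fin d → ℂ)
    (hz : A.map (algebraMap ℝ ℂ) *ᵥ z = lam • z) :
    C.map (algebraMap ℝ ℂ) *ᵥ z = 0 := by
  set f := algebraMap ℝ ℂ
  set Ac := A.map f with hAc
  set Xc := X.map f with hXc
  set Cc := C.map f with hCc
  have hmap : (-(Aᵀ * X) - X * A - Cᵀ * C).map f
      = -(Acᵀ * Xc) - Xc * Ac - Ccᵀ * Cc := by
    ext i j
    simp [hAc, hXc, hCc, Matrix.mul_apply, Matrix.transpose_map, f, Matrix.map_apply,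
      Matrix.sub_apply, Matrix.neg_apply]
  set q := star z ⬝ᵥ (Xc *ᵥ z) with hq
  set s := star (Cc *ᵥ z) ⬝ᵥ (Cc *ᵥ z) with hs
  have hq0 : 0 ≤ q := (psd_map hX).dotProduct_mulVec_nonneg z
  have hM0 : 0 ≤ star z ⬝ᵥ ((-(Aᵀ * X) - X * A - Cᵀ * C).map f *ᵥ z) := (psd_map hlyap).dotProduct_mulVec_nonneg z
  have key : star z ⬝ᵥ ((-(Aᵀ * X) - X * A - Cᵀ * C).map f *ᵥ z)
      = -((starRingEnd ℂ) lam * q) - lam * q - s := by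
    rw [hmap]
    have t1 : star z ⬝ᵥ ((Acᵀ * Xc) *ᵥ z) = (starRingEnd ℂ) lam * q := by
      rw [← Matrix.mulVec_mulVec, Matrix.dotProduct_mulVec, Matrix.vecMul_transpose,
        map_mulVec_star, ← hAc, hz]
      simp [hq, Matrix.dotProduct_mulVec, Matrix.smul_vecMul, smul_dotProduct,
        smul_eq_mul]
    have t2 : star z ⬝ᵥ ((Xc * Ac) *ᵥ z) = lam * q := by
      rw [← Matrix.mulVec_mulVec, hz]
      simp [hq, Matrix.mulVec_smul, dotProduct_smul, smul_eq_mul]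
    have t3 : star z ⬝ᵥ ((Ccᵀ * Cc) *ᵥ z) = s := by
      rw [← Matrix.mulVec_mulVec, Matrix.dotProduct_mulVec, Matrix.vecMul_transpose,
        map_mulVec_star, ← hCc, hs]
    rw [Matrix.sub_mulVec, Matrix.sub_mulVec, Matrix.neg_mulVec, dotProduct_sub,
      dotProduct_sub, dotProduct_neg, t1, t2, t3]
  rw [key] at hM0
  rw [Complex.le_def] at hM0 hq0
  have hs0 : 0 ≤ s := dotProduct_star_self_nonneg _
  rw [Complex.le_def] at hs0
  have hsre : s.re = 0 := by
    have h1 : 0 ≤ lam.re * q.re := mul_nonneg hre hq0.1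
    have h2 := hM0.1
    simp [Complex.sub_re, Complex.neg_re, Complex.mul_re, Complex.conj_re, Complex.conj_im,
      ] at h2
    have hqim : q.im = 0 := by simpa using hq0.2.symm
    rw [hqim] at h2
    have hs1 : (0:ℝ) ≤ s.re := by simpa using hs0.1
    nlinarith [hs1]
  have : s = 0 := Complex.ext hsre hs0.2.symm
  exact dotProduct_star_self_eq_zero.mp (hs ▸ this)


lemma rank_full_inj {d : ℕ} {ι : Type*} [Fintype ι] (V : Matrix ι (Fin d) ℝ) (h : V.rank = d)
    (x : Fin d → ℝ) (hx : V *ᵥ x = 0) : x = 0 := by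
  have h1 := V.mulVecLin.finrank_range_add_finrank_ker
  rw [Module.finrank_fintype_fun_eq_card, Fintype.card_fin] at h1
  have hker : Module.finrank ℝ (LinearMap.ker V.mulVecLin) = 0 := by
    have : V.rank = Module.finrank ℝ (LinearMap.range V.mulVecLin) := rfl
    omega
  have hbot : LinearMap.ker V.mulVecLin = ⊥ := Submodule.finrank_eq_zero.mp hker
  have hx' : x ∈ LinearMap.ker V.mulVecLin := by
    simpa [Matrix.mulVecLin_apply] using hx
  rw [hbot] at hx'
  simpa using hx'

lemma rank_full_inj' {d : ℕ} {ι : Type*} [Fintype ι] (V : Matrix ι (Fin d) ℝ) (h : V.rank = d)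
    (z : Fin d → ℂ) (hz : V.map (algebraMap ℝ ℂ) *ᵥ z = 0) : z = 0 := by
  have hre : V *ᵥ (fun j => (z j).re) = 0 := by
    ext i
    have := congrFun hz i
    have h2 := congrArg Complex.re this
    simpa [Matrix.mulVec, dotProduct, Complex.re_sum, Complex.re_ofReal_mul] using h2
  have him : V *ᵥ (fun j => (z j).im) = 0 := by
    ext i
    have := congrFun hz i
    have h2 := congrArg Complex.im this
    simpa [Matrix.mulVec, dotProduct, Complex.im_sum, Complex.im_ofReal_mul] using h2
  have e1 := rank_full_inj V h _ hre
  have e2 := rank_full_inj V h _ him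
  ext j
  exact Complex.ext (by simpa using congrFun e1 j) (by simpa using congrFun e2 j)

lemma obs_kernel {d m : ℕ} (A : Mat d d) (C : Matrix (Fin m) (Fin d) ℝ)
    (lam : ℂ) (z : Fin d → ℂ)
    (hz : A.map (algebraMap ℝ ℂ) *ᵥ z = lam • z)
    (hCz : C.map (algebraMap ℝ ℂ) *ᵥ z = 0) :
    (obsMat A C).map (algebraMap ℝ ℂ) *ᵥ z = 0 := by
  set f := algebraMap ℝ ℂ
  have hk : ∀ k : ℕ, (C * A ^ k).map f *ᵥ z = 0 := by
    intro k
    have hpow : (A ^ k).map f *ᵥ z = lam ^ k • z := by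
      induction k with
      | zero => simp [Matrix.map_one]
      | succ n ih =>
        have : (A ^ (n+1)).map f = (A.map f) * (A ^ n).map f := by
          rw [pow_succ']
          exact Matrix.map_mul
        rw [this, ← Matrix.mulVec_mulVec, ih, Matrix.mulVec_smul, hz, smul_smul]
        ring_nf
    have : (C * A ^ k).map f = C.map f * (A ^ k).map f := Matrix.map_mul
    rw [this, ← Matrix.mulVec_mulVec, hpow, Matrix.mulVec_smul, hCz, smul_zero]
  ext p
  have := congrFun (hk p.1) p.2
  simpa [obsMat, Matrix.mulVec, dotProduct, Matrix.map_apply] using this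

end StmtHelpers

theorem statement19 {d m : ℕ} (A : Mat d d) (C : Matrix (Fin m) (Fin d) ℝ)
    (X : Mat d d) (hsym : X.IsSymm) (hX : X.PosSemidef)
    (hlyap : (-(Aᵀ * X) - X * A - Cᵀ * C).PosSemidef) :
    (∀ lam : ℂ, 0 ≤ lam.re → ∀ z : Fin d → ℂ,
      A.map (algebraMap ℝ ℂ) *ᵥ z = lam • z → C.map (algebraMap ℝ ℂ) *ᵥ z = 0) ∧
    ((obsMat A C).rank = d →
      ∀ (lam : ℂ) (z : Fin d → ℂ), z ≠ 0 →
        A.map (algebraMap ℝ ℂ) *ᵥ z = lam • z → lam.re < 0) := by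
  constructor
  · exact fun lam hre z hz => part1 A C X hX hlyap lam hre z hz
  · intro hrank lam z hz0 hz
    by_contra hc
    push_neg at hc
    have hCz := part1 A C X hX hlyap lam hc z hz
    have hker := obs_kernel A C lam z hz hCz
    exact hz0 (rank_full_inj' _ hrank z hker)

end
end
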